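/- arXiv:2110.03964 — 5 statements merged into one kernel-verified Lean document; each statement's English description precedes it below -/
import Mathlib

section
/- In the dyadic sequent calculus for SELL^Π, if ¬(a ⪯ b), then for any atomic proposition p the sequent A_Σ : !^b p : · ⊢ !^a p is not derivable; in particular, when a and b are ⪯-unrelated, !^a p and !^b p are not logically equivalent. -/
attribute [local instance] Classical.propDecidable

/-- Subexponential indices: constants from `I` or subexponential variables. -/
inductive SIdx (I : Type) where
  | const : I → SIdx I
  | var : ℕ → SIdx I

/-- Formulas of intuitionistic subexponential linear logic SELL^Π. -/
inductive SForm (I : Type) where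
  | atom : ℕ → SForm I
  | one : SForm I
  | zero : SForm I
  | top : SForm I
  | tensor : SForm I → SForm I → SForm I
  | oplus : SForm I → SForm I → SForm I
  | limp : SForm I → SForm I → SForm I
  | with_ : SForm I → SForm I → SForm I
  | bang : SIdx I → SForm I → SForm I
  /-- ⋒ α:s. F (universal subexponential quantifier, named binder) -/
  | cap : ℕ → SIdx I → SForm I → SForm I
  /-- ⋓ α:s. F (existential subexponential quantifier, named binder) -/
  | cup : ℕ → SIdx I → SForm I → SForm I

/-- A subexponential signature ⟨I, ⪯, U⟩ with U upwardly closed. -/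
structure SSig (I : Type) where
  le : I → I → Prop
  le_refl : ∀ a, le a a
  le_trans : ∀ {a b c}, le a b → le b c → le a c
  U : Set I
  U_up : ∀ {u u'}, u ∈ U → le u u' → u' ∈ U

namespace SIdx

def subst {I : Type} : SIdx I → ℕ → SIdx I → SIdx I
  | const a, _, _ => const a
  | var n, x, l => if n = x then l else var n

def fv {I : Type} : SIdx I → Set ℕ
  | const _ => ∅
  | var n => {n}

end SIdx

namespace SForm

/-- Substitution of an index `l` for the free index variable `x`. -/
def subst {I : Type} : SForm I → ℕ → SIdx I → SForm I
  | atom n, _, _ => atom n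
  | one, _, _ => one
  | zero, _, _ => zero
  | top, _, _ => top
  | tensor F G, x, l => tensor (F.subst x l) (G.subst x l)
  | oplus F G, x, l => oplus (F.subst x l) (G.subst x l)
  | limp F G, x, l => limp (F.subst x l) (G.subst x l)
  | with_ F G, x, l => with_ (F.subst x l) (G.subst x l)
  | bang s F, x, l => bang (s.subst x l) (F.subst x l)
  | cap y s F, x, l => cap y (s.subst x l) (if y = x then F else F.subst x l)
  | cup y s F, x, l => cup y (s.subst x l) (if y = x then F else F.subst x l)

/-- Free index variables of a formula. -/
def fv {I : Type} : SForm I → Set ℕ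
  | atom _ => ∅
  | one => ∅
  | zero => ∅
  | top => ∅
  | tensor F G => F.fv ∪ G.fv
  | oplus F G => F.fv ∪ G.fv
  | limp F G => F.fv ∪ G.fv
  | with_ F G => F.fv ∪ G.fv
  | bang s F => s.fv ∪ F.fv
  | cap y s F => s.fv ∪ (F.fv \ {y})
  | cup y s F => s.fv ∪ (F.fv \ {y})

end SForm

variable {I : Type}

/-- `s` is an unbounded subexponential index (a constant in `U`). -/
def SSig.UnbI (σ : SSig I) (s : SIdx I) : Prop := ∃ u ∈ σ.U, s = SIdx.const u

/-- The set of typed subexponential constants A_Σ = {b : a ∣ b ⪯ a}. -/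
def SSig.ASig (σ : SSig I) : Set (SIdx I × SIdx I) :=
  {pr | ∃ a b : I, σ.le b a ∧ pr = (SIdx.const b, SIdx.const a)}

/-- The preorder on indices determined by ⪯ and the typing context `A`
(`(s, t) ∈ A` is read as `s : t`, i.e. `s ⪯ t`). -/
def SLeA (σ : SSig I) (A : Set (SIdx I × SIdx I)) : SIdx I → SIdx I → Prop :=
  Relation.ReflTransGen
    (fun s t => (s, t) ∈ A ∨ ∃ a b : I, σ.le a b ∧ s = SIdx.const a ∧ t = SIdx.const b)

/-- `F` is of the form `!^u G` with `u ∈ U` (an unbounded banged formula). -/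
def unbBang (σ : SSig I) (F : SForm I) : Prop :=
  ∃ u G, u ∈ σ.U ∧ F = SForm.bang (SIdx.const u) G

/-- `F` is of the form `!^s G` with `s` linear. -/
def linBang (σ : SSig I) (F : SForm I) : Prop :=
  ∃ s G, ¬ σ.UnbI s ∧ F = SForm.bang s G

/-- `Γ^{⪰ a}` is defined: each member of `Γ` is a banged formula whose index is
either unbounded or above `a`. -/
def restrictDef (σ : SSig I) (A : Set (SIdx I × SIdx I)) (a : SIdx I)
    (Γ : Multiset (SForm I)) : Prop :=
  ∀ F ∈ Γ, ∃ s G, F = SForm.bang s G ∧ (σ.UnbI s ∨ SLeA σ A a s)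

/-- The restricted context `Γ^{⪰ a} = {!^b F ∈ Γ ∣ a ⪯ b}`. -/
noncomputable def restrict (σ : SSig I) (A : Set (SIdx I × SIdx I)) (a : SIdx I)
    (Γ : Multiset (SForm I)) : Multiset (SForm I) :=
  Γ.filter (fun F => ∃ s G, F = SForm.bang s G ∧ SLeA σ A a s)

/-- `n` is a fresh subexponential variable for the typing context `A`. -/
def freshA (A : Set (SIdx I × SIdx I)) (n : ℕ) : Prop :=
  ∀ pr ∈ A, n ∉ SIdx.fv pr.1 ∧ n ∉ SIdx.fv pr.2

/-- The dyadic sequent calculus for SELL^Π: `SSeq σ A Γ Ψ G` is the sequent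
`A : Γ : Ψ ⊢ G`, where `Γ` is the subexponential context and `Ψ` the linear one. -/
inductive SSeq (σ : SSig I) :
    Set (SIdx I × SIdx I) → Multiset (SForm I) → Multiset (SForm I) → SForm I → Prop where
  | id {A Υ n} : (∀ F ∈ Υ, unbBang σ F) →
      SSeq σ A Υ {SForm.atom n} (SForm.atom n)
  | tensorL {A Γ Ψ F G H} : SSeq σ A Γ (F ::ₘ G ::ₘ Ψ) H →
      SSeq σ A Γ (SForm.tensor F G ::ₘ Ψ) H
  | tensorR {A Υ Δ Δ' Ψ Ψ' F G} :
      (∀ H ∈ Υ, unbBang σ H) → (∀ H ∈ Δ, linBang σ H) → (∀ H ∈ Δ', linBang σ H) →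
      SSeq σ A (Υ + Δ) Ψ F → SSeq σ A (Υ + Δ') Ψ' G →
      SSeq σ A (Υ + Δ + Δ') (Ψ + Ψ') (SForm.tensor F G)
  | limpL {A Υ Δ Δ' Ψ Ψ' F G H} :
      (∀ K ∈ Υ, unbBang σ K) → (∀ K ∈ Δ, linBang σ K) → (∀ K ∈ Δ', linBang σ K) →
      SSeq σ A (Υ + Δ) Ψ F → SSeq σ A (Υ + Δ') (G ::ₘ Ψ') H →
      SSeq σ A (Υ + Δ + Δ') (SForm.limp F G ::ₘ (Ψ + Ψ')) H
  | limpR {A Γ Ψ F G} : SSeq σ A Γ (F ::ₘ Ψ) G → SSeq σ A Γ Ψ (SForm.limp F G)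
  | withL1 {A Γ Ψ F G H} : SSeq σ A Γ (F ::ₘ Ψ) H →
      SSeq σ A Γ (SForm.with_ F G ::ₘ Ψ) H
  | withL2 {A Γ Ψ F G H} : SSeq σ A Γ (G ::ₘ Ψ) H →
      SSeq σ A Γ (SForm.with_ F G ::ₘ Ψ) H
  | withR {A Γ Ψ F G} : SSeq σ A Γ Ψ F → SSeq σ A Γ Ψ G →
      SSeq σ A Γ Ψ (SForm.with_ F G)
  | oplusL {A Γ Ψ F G H} : SSeq σ A Γ (F ::ₘ Ψ) H → SSeq σ A Γ (G ::ₘ Ψ) H →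
      SSeq σ A Γ (SForm.oplus F G ::ₘ Ψ) H
  | oplusR1 {A Γ Ψ F G} : SSeq σ A Γ Ψ F → SSeq σ A Γ Ψ (SForm.oplus F G)
  | oplusR2 {A Γ Ψ F G} : SSeq σ A Γ Ψ G → SSeq σ A Γ Ψ (SForm.oplus F G)
  | oneL {A Γ Ψ G} : SSeq σ A Γ Ψ G → SSeq σ A Γ (SForm.one ::ₘ Ψ) G
  | oneR {A Υ} : (∀ F ∈ Υ, unbBang σ F) → SSeq σ A Υ 0 SForm.one
  | zeroL {A Γ Ψ G} : SSeq σ A Γ (SForm.zero ::ₘ Ψ) G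
  | topR {A Γ Ψ} : SSeq σ A Γ Ψ SForm.top
  | bangL {A Γ Ψ s F G} : ¬ σ.UnbI s → SSeq σ A Γ (F ::ₘ Ψ) G →
      SSeq σ A (SForm.bang s F ::ₘ Γ) Ψ G
  | copy {A Γ Ψ s F G} : σ.UnbI s → SSeq σ A (SForm.bang s F ::ₘ Γ) (F ::ₘ Ψ) G →
      SSeq σ A (SForm.bang s F ::ₘ Γ) Ψ G
  | store {A Γ Ψ s F G} : SSeq σ A (SForm.bang s F ::ₘ Γ) Ψ G →
      SSeq σ A Γ (SForm.bang s F ::ₘ Ψ) G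
  | bangR {A Γ s G} : restrictDef σ A s Γ → SSeq σ A (restrict σ A s Γ) 0 G →
      SSeq σ A Γ 0 (SForm.bang s G)
  | capL {A Γ Ψ x s F G l} : (∃ t, (l, t) ∈ A ∧ SLeA σ A t s) →
      SSeq σ A Γ (F.subst x l ::ₘ Ψ) G →
      SSeq σ A Γ (SForm.cap x s F ::ₘ Ψ) G
  | capR {A Γ Ψ x s F} {n : ℕ} : freshA A n →
      (∀ H ∈ Γ, n ∉ SForm.fv H) → (∀ H ∈ Ψ, n ∉ SForm.fv H) → n ∉ SForm.fv F →
      SSeq σ (insert (SIdx.var n, s) A) Γ Ψ (F.subst x (SIdx.var n)) →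
      SSeq σ A Γ Ψ (SForm.cap x s F)
  | cupL {A Γ Ψ x s F G} {n : ℕ} : freshA A n →
      (∀ H ∈ Γ, n ∉ SForm.fv H) → (∀ H ∈ Ψ, n ∉ SForm.fv H) →
      n ∉ SForm.fv F → n ∉ SForm.fv G →
      SSeq σ (insert (SIdx.var n, s) A) Γ (F.subst x (SIdx.var n) ::ₘ Ψ) G →
      SSeq σ A Γ (SForm.cup x s F ::ₘ Ψ) G
  | cupR {A Γ Ψ x s F l} : (∃ t, (l, t) ∈ A ∧ SLeA σ A t s) →
      SSeq σ A Γ Ψ (F.subst x l) →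
      SSeq σ A Γ Ψ (SForm.cup x s F)

section Aux

variable {I : Type}

lemma sleA_const {σ : SSig I} {x : I} {t : SIdx I}
    (h : SLeA σ σ.ASig (SIdx.const x) t) : ∃ y, t = SIdx.const y ∧ σ.le x y := by
  induction h with
  | refl => exact ⟨x, rfl, σ.le_refl x⟩
  | tail _ h2 ih =>
    obtain ⟨y, rfl, hxy⟩ := ih
    rcases h2 with hA | ⟨a', b', hle, he1, he2⟩
    · obtain ⟨a1, b1, hle, heq⟩ := hA
      obtain ⟨h1, h2⟩ := Prod.mk.injEq .. ▸ heq
      injection h1 with h1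
      subst h1
      exact ⟨a1, h2, σ.le_trans hxy hle⟩
    · injection he1 with he1
      subst he1
      exact ⟨b', he2, σ.le_trans hxy hle⟩

lemma sell_key {σ : SSig I} {a b : I} (hab : ¬ σ.le a b) (p : ℕ)
    {A : Set (SIdx I × SIdx I)} {Γ Ψ : Multiset (SForm I)} {G : SForm I}
    (h : SSeq σ A Γ Ψ G) : A = σ.ASig →
    (∀ F ∈ Γ, F = SForm.bang (SIdx.const b) (SForm.atom p)) →
    (∀ F ∈ Ψ, F = SForm.atom p) →
    (G = SForm.bang (SIdx.const a) (SForm.atom p) ∨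
      (G = SForm.atom p ∧ Γ = 0 ∧ Ψ = 0)) → False := by
  induction h with
  | id hU =>
    intro hA hΓ hΨ hG
    rcases hG with hG | ⟨hG, hΓ0, hΨ0⟩
    · exact (by cases hG)
    · simp at hΨ0
  | copy hU hprem ih =>
    intro hA hΓ hΨ hG
    have hhead := hΓ _ (Multiset.mem_cons_self _ _)
    injection hhead with hs hF
    subst hs; subst hF
    rcases hG with hG | ⟨_, hΓ0, _⟩
    · refine ih hA hΓ ?_ (Or.inl hG)
      intro K hK
      rcases Multiset.mem_cons.mp hK with h | h
      · exact h
      · exact hΨ K h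
    · exact Multiset.cons_ne_zero hΓ0
  | bangL hlin hprem ih =>
    intro hA hΓ hΨ hG
    have hhead := hΓ _ (Multiset.mem_cons_self _ _)
    injection hhead with hs hF
    subst hs; subst hF
    rcases hG with hG | ⟨_, hΓ0, _⟩
    · refine ih hA (fun K hK => hΓ K (Multiset.mem_cons_of_mem hK)) ?_ (Or.inl hG)
      intro K hK
      rcases Multiset.mem_cons.mp hK with h | h
      · exact h
      · exact hΨ K h
    · exact Multiset.cons_ne_zero hΓ0
  | @bangR A' Γ' s' G' hdef hprem ih =>
    intro hA hΓ hΨ hG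
    rcases hG with hG | ⟨hG, _, _⟩
    · injection hG with hs hG'
      subst hs; subst hG'
      have hres : restrict σ A' (SIdx.const a) Γ' = 0 := by
        rw [restrict, Multiset.filter_eq_nil]
        rintro F hF ⟨s', G', hFeq, hle⟩
        rw [hΓ F hF] at hFeq
        injection hFeq with h1 h2
        subst h1
        rw [hA] at hle
        obtain ⟨y, hy, hley⟩ := sleA_const hle
        injection hy with hy
        subst hy
        exact hab hley
      refine ih hA ?_ (by simp) (Or.inr ⟨rfl, hres, rfl⟩)
      rw [hres]; simp
    · exact (by cases hG)
  | store hprem ih =>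
    intro hA hΓ hΨ hG
    exact absurd (hΨ _ (Multiset.mem_cons_self _ _)) (by simp)
  | tensorL hprem ih =>
    intro hA hΓ hΨ hG
    exact absurd (hΨ _ (Multiset.mem_cons_self _ _)) (by simp)
  | limpL h1 h2 h3 h4 h5 ih1 ih2 =>
    intro hA hΓ hΨ hG
    exact absurd (hΨ _ (Multiset.mem_cons_self _ _)) (by simp)
  | withL1 hprem ih =>
    intro hA hΓ hΨ hG
    exact absurd (hΨ _ (Multiset.mem_cons_self _ _)) (by simp)
  | withL2 hprem ih =>
    intro hA hΓ hΨ hG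
    exact absurd (hΨ _ (Multiset.mem_cons_self _ _)) (by simp)
  | oplusL h1 h2 ih1 ih2 =>
    intro hA hΓ hΨ hG
    exact absurd (hΨ _ (Multiset.mem_cons_self _ _)) (by simp)
  | oneL hprem ih =>
    intro hA hΓ hΨ hG
    exact absurd (hΨ _ (Multiset.mem_cons_self _ _)) (by simp)
  | zeroL =>
    intro hA hΓ hΨ hG
    exact absurd (hΨ _ (Multiset.mem_cons_self _ _)) (by simp)
  | capL h1 h2 ih =>
    intro hA hΓ hΨ hG
    exact absurd (hΨ _ (Multiset.mem_cons_self _ _)) (by simp)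
  | cupL h1 h2 h3 h4 h5 h6 ih =>
    intro hA hΓ hΨ hG
    exact absurd (hΨ _ (Multiset.mem_cons_self _ _)) (by simp)
  | tensorR h1 h2 h3 h4 h5 ih1 ih2 =>
    intro hA hΓ hΨ hG
    rcases hG with hG | ⟨hG, _, _⟩ <;> exact (by cases hG)
  | limpR hprem ih =>
    intro hA hΓ hΨ hG
    rcases hG with hG | ⟨hG, _, _⟩ <;> exact (by cases hG)
  | withR h1 h2 ih1 ih2 =>
    intro hA hΓ hΨ hG
    rcases hG with hG | ⟨hG, _, _⟩ <;> exact (by cases hG)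
  | oplusR1 hprem ih =>
    intro hA hΓ hΨ hG
    rcases hG with hG | ⟨hG, _, _⟩ <;> exact (by cases hG)
  | oplusR2 hprem ih =>
    intro hA hΓ hΨ hG
    rcases hG with hG | ⟨hG, _, _⟩ <;> exact (by cases hG)
  | oneR hU =>
    intro hA hΓ hΨ hG
    rcases hG with hG | ⟨hG, _, _⟩ <;> exact (by cases hG)
  | topR =>
    intro hA hΓ hΨ hG
    rcases hG with hG | ⟨hG, _, _⟩ <;> exact (by cases hG)
  | capR h1 h2 h3 h4 h5 ih =>
    intro hA hΓ hΨ hG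
    rcases hG with hG | ⟨hG, _, _⟩ <;> exact (by cases hG)
  | cupR h1 h2 ih =>
    intro hA hΓ hΨ hG
    rcases hG with hG | ⟨hG, _, _⟩ <;> exact (by cases hG)

end Aux

/-- If `¬ a ⪯ b` then `A_Σ : !^b p : · ⊢ !^a p` is not derivable; in particular,
for ⪯-unrelated `a` and `b`, `!^a p` and `!^b p` are not logically equivalent
(the formula `(!^a p ⊸ !^b p) & (!^b p ⊸ !^a p)` is not provable). -/
theorem sell_bang_not_accessible {I : Type} (σ : SSig I) :
    (∀ a b : I, ¬ σ.le a b → ∀ p : ℕ,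
      ¬ SSeq σ σ.ASig {SForm.bang (SIdx.const b) (SForm.atom p)} 0
          (SForm.bang (SIdx.const a) (SForm.atom p))) ∧
    (∀ a b : I, ¬ σ.le a b → ¬ σ.le b a → ∀ p : ℕ,
      ¬ SSeq σ σ.ASig 0 0
          (SForm.with_
            (SForm.limp (SForm.bang (SIdx.const a) (SForm.atom p))
                        (SForm.bang (SIdx.const b) (SForm.atom p)))
            (SForm.limp (SForm.bang (SIdx.const b) (SForm.atom p))
                        (SForm.bang (SIdx.const a) (SForm.atom p))))) := by
  have part1 : ∀ a b : I, ¬ σ.le a b → ∀ p : ℕ,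
      ¬ SSeq σ σ.ASig {SForm.bang (SIdx.const b) (SForm.atom p)} 0
        (SForm.bang (SIdx.const a) (SForm.atom p)) := by
    intro a b hab p h
    exact sell_key hab p h rfl (by simp) (by simp) (Or.inl rfl)
  refine ⟨part1, ?_⟩
  intro a b hab hba p h
  obtain ⟨M, N, hM, hN, h⟩ : ∃ M N : Multiset (SForm I), 0 = M ∧ 0 = N ∧
      SSeq σ σ.ASig M N (SForm.with_
        (SForm.limp (SForm.bang (SIdx.const a) (SForm.atom p))
                    (SForm.bang (SIdx.const b) (SForm.atom p)))
        (SForm.limp (SForm.bang (SIdx.const b) (SForm.atom p))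
                    (SForm.bang (SIdx.const a) (SForm.atom p)))) := ⟨0, 0, rfl, rfl, h⟩
  cases h with
  | withR h1 h2 =>
    clear h2
    subst hM; subst hN
    obtain ⟨M, N, hM, hN, h1⟩ : ∃ M N : Multiset (SForm I), 0 = M ∧ 0 = N ∧
        SSeq σ σ.ASig M N (SForm.limp (SForm.bang (SIdx.const a) (SForm.atom p))
                    (SForm.bang (SIdx.const b) (SForm.atom p))) := ⟨0, 0, rfl, rfl, h1⟩
    cases h1 with
    | limpR h1 =>
      subst hM; subst hN
      generalize hP : (SForm.bang (SIdx.const a) (SForm.atom p) ::ₘ (0 : Multiset (SForm I))) = P at h1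
      generalize hZ : (0 : Multiset (SForm I)) = Z at h1
      cases h1 with
      | @store A' Γ' Ψ' s' F' G' hprem =>
        rcases Multiset.cons_eq_cons.mp hP with ⟨h1, h2⟩ | ⟨-, u, hu, -⟩
        · injection h1 with hs hF
          subst hs; subst hF; subst h2; subst hZ
          refine sell_key hba p hprem rfl ?_ (by simp) (Or.inl rfl)
          intro K hK
          rcases Multiset.mem_cons.mp hK with h | h
          · exact h
          · simp at h
        · exact Multiset.cons_ne_zero hu.symm
      | copy hU hprem => exact Multiset.cons_ne_zero hZ.symm
      | bangL hlin hprem => exact Multiset.cons_ne_zero hZ.symm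
      | bangR hdef hprem => exact Multiset.cons_ne_zero hP
      | tensorL hprem =>
        rcases Multiset.cons_eq_cons.mp hP with ⟨h1, -⟩ | ⟨-, u, hu, -⟩
        · exact (by cases h1)
        · exact Multiset.cons_ne_zero hu.symm
      | limpL h1 h2 h3 h4 h5 =>
        rcases Multiset.cons_eq_cons.mp hP with ⟨h1, -⟩ | ⟨-, u, hu, -⟩
        · exact (by cases h1)
        · exact Multiset.cons_ne_zero hu.symm
      | withL1 hprem =>
        rcases Multiset.cons_eq_cons.mp hP with ⟨h1, -⟩ | ⟨-, u, hu, -⟩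
        · exact (by cases h1)
        · exact Multiset.cons_ne_zero hu.symm
      | withL2 hprem =>
        rcases Multiset.cons_eq_cons.mp hP with ⟨h1, -⟩ | ⟨-, u, hu, -⟩
        · exact (by cases h1)
        · exact Multiset.cons_ne_zero hu.symm
      | oplusL h1 h2 =>
        rcases Multiset.cons_eq_cons.mp hP with ⟨h1, -⟩ | ⟨-, u, hu, -⟩
        · exact (by cases h1)
        · exact Multiset.cons_ne_zero hu.symm
      | oneL hprem =>
        rcases Multiset.cons_eq_cons.mp hP with ⟨h1, -⟩ | ⟨-, u, hu, -⟩
        · exact (by cases h1)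
        · exact Multiset.cons_ne_zero hu.symm
      | zeroL =>
        rcases Multiset.cons_eq_cons.mp hP with ⟨h1, -⟩ | ⟨-, u, hu, -⟩
        · exact (by cases h1)
        · exact Multiset.cons_ne_zero hu.symm
      | capL h1 h2 =>
        rcases Multiset.cons_eq_cons.mp hP with ⟨h1, -⟩ | ⟨-, u, hu, -⟩
        · exact (by cases h1)
        · exact Multiset.cons_ne_zero hu.symm
      | cupL h1 h2 h3 h4 h5 h6 =>
        rcases Multiset.cons_eq_cons.mp hP with ⟨h1, -⟩ | ⟨-, u, hu, -⟩
        · exact (by cases h1)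
        · exact Multiset.cons_ne_zero hu.symm
    | copy hU hprem => exact Multiset.cons_ne_zero hM.symm
    | bangL hlin hprem => exact Multiset.cons_ne_zero hM.symm
    | store hprem => exact Multiset.cons_ne_zero hN.symm
    | tensorL hprem => exact Multiset.cons_ne_zero hN.symm
    | limpL h1 h2 h3 h4 h5 => exact Multiset.cons_ne_zero hN.symm
    | withL1 hprem => exact Multiset.cons_ne_zero hN.symm
    | withL2 hprem => exact Multiset.cons_ne_zero hN.symm
    | oplusL h1 h2 => exact Multiset.cons_ne_zero hN.symm
    | oneL hprem => exact Multiset.cons_ne_zero hN.symm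
    | zeroL => exact Multiset.cons_ne_zero hN.symm
    | capL h1 h2 => exact Multiset.cons_ne_zero hN.symm
    | cupL h1 h2 h3 h4 h5 h6 => exact Multiset.cons_ne_zero hN.symm
  | copy hU hprem => exact Multiset.cons_ne_zero hM.symm
  | bangL hlin hprem => exact Multiset.cons_ne_zero hM.symm
  | store hprem => exact Multiset.cons_ne_zero hN.symm
  | tensorL hprem => exact Multiset.cons_ne_zero hN.symm
  | limpL h1 h2 h3 h4 h5 => exact Multiset.cons_ne_zero hN.symm
  | withL1 hprem => exact Multiset.cons_ne_zero hN.symm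
  | withL2 hprem => exact Multiset.cons_ne_zero hN.symm
  | oplusL h1 h2 => exact Multiset.cons_ne_zero hN.symm
  | oneL hprem => exact Multiset.cons_ne_zero hN.symm
  | zeroL => exact Multiset.cons_ne_zero hN.symm
  | capL h1 h2 => exact Multiset.cons_ne_zero hN.symm
  | cupL h1 h2 h3 h4 h5 h6 => exact Multiset.cons_ne_zero hN.symm
end

section
/- Contraction of unbounded subexponential formulas is admissible in the dyadic sequent calculus for SELL^Π: if A : Γ, !^u F, !^u F : Ψ ⊢ G is derivable and u ∈ U, then A : Γ, !^u F : Ψ ⊢ G is derivable. -/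
attribute [local instance] Classical.propDecidable

variable {I : Type}

/-- Case analysis for a doubled cons equal to a cons. -/
lemma cons2_cases {α : Type*} {D X : α} {Γ Ψ0 : Multiset α}
    (h : D ::ₘ D ::ₘ Γ = X ::ₘ Ψ0) :
    (X = D ∧ Ψ0 = D ::ₘ Γ) ∨ ∃ Γ₂, Γ = X ::ₘ Γ₂ ∧ Ψ0 = D ::ₘ D ::ₘ Γ₂ := by
  rcases Multiset.cons_eq_cons.1 h.symm with ⟨h1, h2⟩ | ⟨hne, cs, h1, h2⟩
  · exact Or.inl ⟨h1, h2⟩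
  · rcases Multiset.cons_eq_cons.1 h2 with ⟨h3, h4⟩ | ⟨_, cs2, h3, h4⟩
    · exact absurd h3 (Ne.symm hne)
    · exact Or.inr ⟨cs2, h3, by rw [h1, h4]⟩

/-- Splitting: two unbounded banged copies must land in the unbounded part. -/
lemma split_unb {I : Type} (σ : SSig I) {u : I} {F : SForm I} (hu : u ∈ σ.U)
    {Υ Δ Δ' Γ : Multiset (SForm I)}
    (hΔ : ∀ H ∈ Δ, linBang σ H) (hΔ' : ∀ H ∈ Δ', linBang σ H)
    (heq : Υ + Δ + Δ' =
      SForm.bang (SIdx.const u) F ::ₘ SForm.bang (SIdx.const u) F ::ₘ Γ) :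
    ∃ Υ', Υ = SForm.bang (SIdx.const u) F ::ₘ SForm.bang (SIdx.const u) F ::ₘ Υ' ∧
      Γ = Υ' + Δ + Δ' := by
  classical
  set D : SForm I := SForm.bang (SIdx.const u) F with hD
  have hnotΔ : ∀ {Δ₀ : Multiset (SForm I)}, (∀ H ∈ Δ₀, linBang σ H) → D ∉ Δ₀ := by
    intro Δ₀ hlin hmem
    rcases hlin D hmem with ⟨s, G, hns, hDeq⟩
    rw [hD] at hDeq
    injection hDeq with h1 h2
    exact hns ⟨u, hu, h1.symm⟩
  have hcount : 2 ≤ Multiset.count D Υ := by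
    have := congrArg (Multiset.count D) heq
    simp [Multiset.count_eq_zero.2 (hnotΔ hΔ), Multiset.count_eq_zero.2 (hnotΔ hΔ')]
      at this
    omega
  have hle : (D ::ₘ D ::ₘ 0) ≤ Υ := by
    rw [Multiset.le_iff_count]
    intro x
    by_cases hx : x = D
    · subst hx; simpa using hcount
    · simp [Multiset.count_cons_of_ne hx, Multiset.count_singleton, hx]
  obtain ⟨Υ', hΥ'⟩ := Multiset.le_iff_exists_add.1 hle
  have hΥeq : Υ = D ::ₘ D ::ₘ Υ' := by
    rw [hΥ']; simp [Multiset.cons_add]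
  refine ⟨Υ', hΥeq, ?_⟩
  have : D ::ₘ D ::ₘ (Υ' + Δ + Δ') = D ::ₘ D ::ₘ Γ := by
    rw [← heq, hΥeq]; simp [Multiset.cons_add]
  have := (Multiset.cons_inj_right D).1 ((Multiset.cons_inj_right D).1 this)
  exact this.symm

lemma sell_contr_aux {I : Type} (σ : SSig I) {u : I} (hu : u ∈ σ.U) (F0 : SForm I)
    {A : Set (SIdx I × SIdx I)} {Γ' Ψ : Multiset (SForm I)} {G : SForm I}
    (h : SSeq σ A Γ' Ψ G) :
    ∀ Γ, Γ' = SForm.bang (SIdx.const u) F0 ::ₘ SForm.bang (SIdx.const u) F0 ::ₘ Γ →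
    SSeq σ A (SForm.bang (SIdx.const u) F0 ::ₘ Γ) Ψ G := by
  set D : SForm I := SForm.bang (SIdx.const u) F0 with hD
  induction h with
  | @id A Υ n hΥ =>
    intro Γ hΓ
    refine SSeq.id ?_
    intro K hK
    rcases Multiset.mem_cons.1 hK with rfl | hK
    · exact ⟨u, F0, hu, rfl⟩
    · exact hΥ K (by rw [hΓ]; exact Multiset.mem_cons_of_mem (Multiset.mem_cons_of_mem hK))
  | tensorL h ih => intro Γ hΓ; exact SSeq.tensorL (ih Γ hΓ)
  | @tensorR A Υ Δ Δ' Ψ Ψ' F G hΥ hΔ hΔ' h1 h2 ih1 ih2 =>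
    intro Γ hΓ
    obtain ⟨Υ', hΥeq, hΓeq⟩ := split_unb σ hu hΔ hΔ' hΓ
    have p1 := ih1 (Υ' + Δ) (by rw [hΥeq]; simp [Multiset.cons_add]; rfl)
    have p2 := ih2 (Υ' + Δ') (by rw [hΥeq]; simp [Multiset.cons_add]; rfl)
    rw [← Multiset.cons_add] at p1 p2
    have hΥ' : ∀ H ∈ D ::ₘ Υ', unbBang σ H := by
      intro K hK
      rcases Multiset.mem_cons.1 hK with rfl | hK
      · exact ⟨u, F0, hu, rfl⟩
      · exact hΥ K (by rw [hΥeq]; exact Multiset.mem_cons_of_mem (Multiset.mem_cons_of_mem hK))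
    have key : (D ::ₘ Υ') + Δ + Δ' = D ::ₘ Γ := by
      rw [hΓeq]; simp [Multiset.cons_add]
    rw [← key]
    exact SSeq.tensorR hΥ' hΔ hΔ' p1 p2
  | @limpL A Υ Δ Δ' Ψ Ψ' F G H hΥ hΔ hΔ' h1 h2 ih1 ih2 =>
    intro Γ hΓ
    obtain ⟨Υ', hΥeq, hΓeq⟩ := split_unb σ hu hΔ hΔ' hΓ
    have p1 := ih1 (Υ' + Δ) (by rw [hΥeq]; simp [Multiset.cons_add]; rfl)
    have p2 := ih2 (Υ' + Δ') (by rw [hΥeq]; simp [Multiset.cons_add]; rfl)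
    rw [← Multiset.cons_add] at p1 p2
    have hΥ' : ∀ K ∈ D ::ₘ Υ', unbBang σ K := by
      intro K hK
      rcases Multiset.mem_cons.1 hK with rfl | hK
      · exact ⟨u, F0, hu, rfl⟩
      · exact hΥ K (by rw [hΥeq]; exact Multiset.mem_cons_of_mem (Multiset.mem_cons_of_mem hK))
    have key : (D ::ₘ Υ') + Δ + Δ' = D ::ₘ Γ := by
      rw [hΓeq]; simp [Multiset.cons_add]
    rw [← key]
    exact SSeq.limpL hΥ' hΔ hΔ' p1 p2
  | limpR h ih => intro Γ hΓ; exact SSeq.limpR (ih Γ hΓ)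
  | withL1 h ih => intro Γ hΓ; exact SSeq.withL1 (ih Γ hΓ)
  | withL2 h ih => intro Γ hΓ; exact SSeq.withL2 (ih Γ hΓ)
  | withR h1 h2 ih1 ih2 => intro Γ hΓ; exact SSeq.withR (ih1 Γ hΓ) (ih2 Γ hΓ)
  | oplusL h1 h2 ih1 ih2 => intro Γ hΓ; exact SSeq.oplusL (ih1 Γ hΓ) (ih2 Γ hΓ)
  | oplusR1 h ih => intro Γ hΓ; exact SSeq.oplusR1 (ih Γ hΓ)
  | oplusR2 h ih => intro Γ hΓ; exact SSeq.oplusR2 (ih Γ hΓ)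
  | oneL h ih => intro Γ hΓ; exact SSeq.oneL (ih Γ hΓ)
  | @oneR A Υ hΥ =>
    intro Γ hΓ
    refine SSeq.oneR ?_
    intro K hK
    rcases Multiset.mem_cons.1 hK with rfl | hK
    · exact ⟨u, F0, hu, rfl⟩
    · exact hΥ K (by rw [hΓ]; exact Multiset.mem_cons_of_mem (Multiset.mem_cons_of_mem hK))
  | zeroL => intro Γ hΓ; exact SSeq.zeroL
  | topR => intro Γ hΓ; exact SSeq.topR
  | @bangL A Γ₀ Ψ s F G hs h ih =>
    intro Γ hΓ
    rcases cons2_cases hΓ.symm with ⟨hX, hrest⟩ | ⟨Γ₂, hΓ₂, hrest⟩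
    · exfalso
      rw [hD] at hX
      injection hX with h1 h2
      exact hs ⟨u, hu, h1⟩
    · have p := ih Γ₂ hrest
      rw [hΓ₂, Multiset.cons_swap]
      exact SSeq.bangL hs p
  | @copy A Γ₀ Ψ s F G hs h ih =>
    intro Γ hΓ
    rcases cons2_cases hΓ.symm with ⟨hX, hrest⟩ | ⟨Γ₂, hΓ₂, hrest⟩
    · rw [hD] at hX
      injection hX with h1 h2
      subst h1; subst h2
      have p := ih Γ (by rw [hΓ])
      exact SSeq.copy hs p
    · have p := ih (SForm.bang s F ::ₘ Γ₂)
        (by rw [hrest, Multiset.cons_swap (SForm.bang s F) D,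
          Multiset.cons_swap (SForm.bang s F) D])
      rw [Multiset.cons_swap] at p
      rw [hΓ₂, Multiset.cons_swap]
      exact SSeq.copy hs p
  | @store A Γ₀ Ψ s F G h ih =>
    intro Γ hΓ
    have p := ih (SForm.bang s F ::ₘ Γ)
      (by rw [hΓ, Multiset.cons_swap (SForm.bang s F) D,
        Multiset.cons_swap (SForm.bang s F) D])
    rw [Multiset.cons_swap] at p
    exact SSeq.store p
  | @bangR A Γ₀ s G hdef h ih =>
    intro Γ hΓ
    classical
    have hdef' : restrictDef σ A s (D ::ₘ Γ) := by
      intro K hK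
      rcases Multiset.mem_cons.1 hK with rfl | hK
      · exact ⟨SIdx.const u, F0, rfl, Or.inl ⟨u, hu, rfl⟩⟩
      · exact hdef K (by rw [hΓ]; exact Multiset.mem_cons_of_mem (Multiset.mem_cons_of_mem hK))
    by_cases hp : ∃ s', (∃ G', D = SForm.bang s' G') ∧ SLeA σ A s s'
    · have hres : restrict σ A s Γ₀ = D ::ₘ D ::ₘ restrict σ A s Γ := by
        rw [hΓ]
        unfold restrict
        simp [Multiset.filter_cons, hp]
      have p := ih (restrict σ A s Γ) hres
      have : restrict σ A s (D ::ₘ Γ) = D ::ₘ restrict σ A s Γ := by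
        unfold restrict
        simp [Multiset.filter_cons, hp]
      refine SSeq.bangR hdef' ?_
      rw [this]
      exact p
    · have hres : restrict σ A s Γ₀ = restrict σ A s (D ::ₘ Γ) := by
        rw [hΓ]
        unfold restrict
        simp [Multiset.filter_cons, hp]
      refine SSeq.bangR hdef' ?_
      rw [← hres]
      exact h
  | capL hl h ih => intro Γ hΓ; exact SSeq.capL hl (ih Γ hΓ)
  | @capR A Γ₀ Ψ x s F n hfresh hΓfv hΨfv hFfv h ih =>
    intro Γ hΓ
    refine SSeq.capR hfresh ?_ hΨfv hFfv (ih Γ hΓ)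
    intro K hK
    rcases Multiset.mem_cons.1 hK with rfl | hK
    · exact hΓfv _ (by rw [hΓ]; exact Multiset.mem_cons_self _ _)
    · exact hΓfv _ (by rw [hΓ]; exact Multiset.mem_cons_of_mem (Multiset.mem_cons_of_mem hK))
  | @cupL A Γ₀ Ψ x s F G n hfresh hΓfv hΨfv hFfv hGfv h ih =>
    intro Γ hΓ
    refine SSeq.cupL hfresh ?_ hΨfv hFfv hGfv (ih Γ hΓ)
    intro K hK
    rcases Multiset.mem_cons.1 hK with rfl | hK
    · exact hΓfv _ (by rw [hΓ]; exact Multiset.mem_cons_self _ _)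
    · exact hΓfv _ (by rw [hΓ]; exact Multiset.mem_cons_of_mem (Multiset.mem_cons_of_mem hK))
  | cupR hl h ih => intro Γ hΓ; exact SSeq.cupR hl (ih Γ hΓ)

/-- **Admissibility of contraction** for unbounded subexponential formulas:
if `A : Γ, !^u F, !^u F : Ψ ⊢ G` is derivable and `u ∈ U`, then
`A : Γ, !^u F : Ψ ⊢ G` is derivable. -/
theorem sell_contraction {I : Type} (σ : SSig I) (A : Set (SIdx I × SIdx I))
    (Γ Ψ : Multiset (SForm I)) (G F : SForm I) (u : I) (hu : u ∈ σ.U)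
    (h : SSeq σ A
      (SForm.bang (SIdx.const u) F ::ₘ SForm.bang (SIdx.const u) F ::ₘ Γ) Ψ G) :
    SSeq σ A (SForm.bang (SIdx.const u) F ::ₘ Γ) Ψ G :=
  sell_contr_aux σ hu F h Γ rfl
end

section
/- The left ⊗ macro rule of the domain-aware type system is admissible in the dyadic sequent calculus for SELL^Π: if A : Γ, !^a F, !^a G : · ⊢ H is derivable, then A : Γ, !^a(!^a F ⊗ !^a G) : · ⊢ H is derivable. -/
attribute [local instance] Classical.propDecidable

variable {I : Type}

section Aux

variable {I : Type}

/-- The combined formula `!^u (!^u F ⊗ !^u G)`. -/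
private def bigK (u : I) (F G : SForm I) : SForm I :=
  SForm.bang (SIdx.const u)
    (SForm.tensor (SForm.bang (SIdx.const u) F) (SForm.bang (SIdx.const u) G))

private lemma unbI_const (σ : SSig I) {u : I} (hu : u ∈ σ.U) :
    σ.UnbI (SIdx.const u) := ⟨u, hu, rfl⟩

private lemma not_lin (σ : SSig I) {u : I} (hu : u ∈ σ.U) (X : SForm I) :
    ¬ linBang σ (SForm.bang (SIdx.const u) X) := by
  rintro ⟨s, G₀, hns, heq⟩
  injection heq with e1 e2
  subst e1
  exact hns ⟨u, hu, rfl⟩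

private lemma unb_bigK (σ : SSig I) {u : I} (hu : u ∈ σ.U) (F G : SForm I) :
    unbBang σ (bigK u F G) := ⟨u, _, hu, rfl⟩

private lemma mem_unb_left (σ : SSig I) {u : I} (hu : u ∈ σ.U) {X : SForm I}
    {Υ Δ Δ' : Multiset (SForm I)}
    (h : SForm.bang (SIdx.const u) X ∈ Υ + Δ + Δ')
    (hΔ : ∀ K ∈ Δ, linBang σ K) (hΔ' : ∀ K ∈ Δ', linBang σ K) :
    SForm.bang (SIdx.const u) X ∈ Υ := by
  rcases Multiset.mem_add.1 h with h | h
  · rcases Multiset.mem_add.1 h with h | h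
    · exact h
    · exact absurd (hΔ _ h) (not_lin σ hu X)
  · exact absurd (hΔ' _ h) (not_lin σ hu X)

private lemma fv_bigK_not_mem {σ : SSig I} {u : I} {F G : SForm I} {n : ℕ}
    (hF : n ∉ SForm.fv (SForm.bang (SIdx.const u) F))
    (hG : n ∉ SForm.fv (SForm.bang (SIdx.const u) G)) :
    n ∉ SForm.fv (bigK u F G) := by
  simp only [bigK, SForm.fv, SIdx.fv, Set.empty_union, Set.mem_union] at *
  tauto

private lemma weak (σ : SSig I) {u : I} (hu : u ∈ σ.U) (F G : SForm I)
    {A : Set (SIdx I × SIdx I)} {Γ Ψ : Multiset (SForm I)} {H : SForm I}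
    (h : SSeq σ A Γ Ψ H) :
    SForm.bang (SIdx.const u) F ∈ Γ → SForm.bang (SIdx.const u) G ∈ Γ →
    SSeq σ A (bigK u F G ::ₘ Γ) Ψ H := by
  induction h with
  | @id A Υ m hΥ =>
    intro _ _
    refine SSeq.id ?_
    intro K hK
    rcases Multiset.mem_cons.1 hK with rfl | hK
    · exact unb_bigK σ hu F G
    · exact hΥ _ hK
  | @tensorL A Γ Ψ F' G' H' h1 ih =>
    intro hF hG; exact SSeq.tensorL (ih hF hG)
  | @tensorR A Υ Δ Δ' Ψ Ψ' F' G' hΥ hΔ hΔ' h1 h2 ih1 ih2 =>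
    intro hF hG
    have hFΥ := mem_unb_left σ hu hF hΔ hΔ'
    have hGΥ := mem_unb_left σ hu hG hΔ hΔ'
    have d1 := ih1 (Multiset.mem_add.2 (Or.inl hFΥ)) (Multiset.mem_add.2 (Or.inl hGΥ))
    have d2 := ih2 (Multiset.mem_add.2 (Or.inl hFΥ)) (Multiset.mem_add.2 (Or.inl hGΥ))
    rw [← Multiset.cons_add, ← Multiset.cons_add]
    refine SSeq.tensorR ?_ hΔ hΔ' ?_ ?_
    · intro K hK
      rcases Multiset.mem_cons.1 hK with rfl | hK
      · exact unb_bigK σ hu F G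
      · exact hΥ _ hK
    · rw [Multiset.cons_add]; exact d1
    · rw [Multiset.cons_add]; exact d2
  | @limpL A Υ Δ Δ' Ψ Ψ' F' G' H' hΥ hΔ hΔ' h1 h2 ih1 ih2 =>
    intro hF hG
    have hFΥ := mem_unb_left σ hu hF hΔ hΔ'
    have hGΥ := mem_unb_left σ hu hG hΔ hΔ'
    have d1 := ih1 (Multiset.mem_add.2 (Or.inl hFΥ)) (Multiset.mem_add.2 (Or.inl hGΥ))
    have d2 := ih2 (Multiset.mem_add.2 (Or.inl hFΥ)) (Multiset.mem_add.2 (Or.inl hGΥ))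
    rw [← Multiset.cons_add, ← Multiset.cons_add]
    refine SSeq.limpL ?_ hΔ hΔ' ?_ ?_
    · intro K hK
      rcases Multiset.mem_cons.1 hK with rfl | hK
      · exact unb_bigK σ hu F G
      · exact hΥ _ hK
    · rw [Multiset.cons_add]; exact d1
    · rw [Multiset.cons_add]; exact d2
  | limpR h1 ih => intro hF hG; exact SSeq.limpR (ih hF hG)
  | withL1 h1 ih => intro hF hG; exact SSeq.withL1 (ih hF hG)
  | withL2 h1 ih => intro hF hG; exact SSeq.withL2 (ih hF hG)
  | withR h1 h2 ih1 ih2 => intro hF hG; exact SSeq.withR (ih1 hF hG) (ih2 hF hG)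
  | oplusL h1 h2 ih1 ih2 => intro hF hG; exact SSeq.oplusL (ih1 hF hG) (ih2 hF hG)
  | oplusR1 h1 ih => intro hF hG; exact SSeq.oplusR1 (ih hF hG)
  | oplusR2 h1 ih => intro hF hG; exact SSeq.oplusR2 (ih hF hG)
  | oneL h1 ih => intro hF hG; exact SSeq.oneL (ih hF hG)
  | @oneR A Υ hΥ =>
    intro _ _
    refine SSeq.oneR ?_
    intro K hK
    rcases Multiset.mem_cons.1 hK with rfl | hK
    · exact unb_bigK σ hu F G
    · exact hΥ _ hK
  | zeroL => intro _ _; exact SSeq.zeroL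
  | topR => intro _ _; exact SSeq.topR
  | @bangL A Γ Ψ s F₀ G₀ hs h1 ih =>
    intro hF hG
    have hF' : SForm.bang (SIdx.const u) F ∈ Γ := by
      rcases Multiset.mem_cons.1 hF with heq | h'
      · injection heq with e1 e2; subst e1; exact absurd (unbI_const σ hu) hs
      · exact h'
    have hG' : SForm.bang (SIdx.const u) G ∈ Γ := by
      rcases Multiset.mem_cons.1 hG with heq | h'
      · injection heq with e1 e2; subst e1; exact absurd (unbI_const σ hu) hs
      · exact h'
    rw [Multiset.cons_swap]
    exact SSeq.bangL hs (ih hF' hG')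
  | @copy A Γ Ψ s F₀ G₀ hs h1 ih =>
    intro hF hG
    rw [Multiset.cons_swap]
    refine SSeq.copy hs ?_
    rw [Multiset.cons_swap]
    exact ih hF hG
  | @store A Γ Ψ s F₀ G₀ h1 ih =>
    intro hF hG
    have d := ih (Multiset.mem_cons_of_mem hF) (Multiset.mem_cons_of_mem hG)
    refine SSeq.store ?_
    rw [Multiset.cons_swap]
    exact d
  | @bangR A Γ s G₀ hdef h1 ih =>
    intro hF hG
    by_cases hle : SLeA σ A s (SIdx.const u)
    · have hFr : SForm.bang (SIdx.const u) F ∈ restrict σ A s Γ :=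
        Multiset.mem_filter.2 ⟨hF, ⟨SIdx.const u, F, rfl, hle⟩⟩
      have hGr : SForm.bang (SIdx.const u) G ∈ restrict σ A s Γ :=
        Multiset.mem_filter.2 ⟨hG, ⟨SIdx.const u, G, rfl, hle⟩⟩
      have d := ih hFr hGr
      refine SSeq.bangR ?_ ?_
      · intro K hK
        rcases Multiset.mem_cons.1 hK with rfl | hK
        · exact ⟨SIdx.const u, _, rfl, Or.inl (unbI_const σ hu)⟩
        · exact hdef _ hK
      · show SSeq σ A (restrict σ A s (bigK u F G ::ₘ Γ)) 0 G₀
        unfold restrict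
        rw [Multiset.filter_cons_of_pos]
        · exact d
        · exact ⟨SIdx.const u, _, rfl, hle⟩
    · refine SSeq.bangR ?_ ?_
      · intro K hK
        rcases Multiset.mem_cons.1 hK with rfl | hK
        · exact ⟨SIdx.const u, _, rfl, Or.inl (unbI_const σ hu)⟩
        · exact hdef _ hK
      · show SSeq σ A (restrict σ A s (bigK u F G ::ₘ Γ)) 0 G₀
        unfold restrict
        rw [Multiset.filter_cons_of_neg]
        · exact h1
        · rintro ⟨s', G', heq, hle'⟩
          injection heq with e1 e2
          subst e1
          exact hle hle'
  | capL hex h1 ih => intro hF hG; exact SSeq.capL hex (ih hF hG)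
  | @capR A Γ Ψ x s F₀ n hfresh hΓ hΨ hF₀ h1 ih =>
    intro hF hG
    refine SSeq.capR hfresh ?_ hΨ hF₀ (ih hF hG)
    intro K hK
    rcases Multiset.mem_cons.1 hK with rfl | hK
    · exact fv_bigK_not_mem (σ := σ) (hΓ _ hF) (hΓ _ hG)
    · exact hΓ _ hK
  | @cupL A Γ Ψ x s F₀ G₀ n hfresh hΓ hΨ hF₀ hG₀ h1 ih =>
    intro hF hG
    refine SSeq.cupL hfresh ?_ hΨ hF₀ hG₀ (ih hF hG)
    intro K hK
    rcases Multiset.mem_cons.1 hK with rfl | hK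
    · exact fv_bigK_not_mem (σ := σ) (hΓ _ hF) (hΓ _ hG)
    · exact hΓ _ hK
  | cupR hex h1 ih => intro hF hG; exact SSeq.cupR hex (ih hF hG)

end Aux

/-- **Left ⊗ macro rule**: if `A : Γ, !^a F, !^a G : · ⊢ H` is derivable, then
`A : Γ, !^a(!^a F ⊗ !^a G) : · ⊢ H` is derivable. -/
theorem sell_tensor_left_macro {I : Type} (σ : SSig I) (A : Set (SIdx I × SIdx I))
    (Γ : Multiset (SForm I)) (a : SIdx I) (F G H : SForm I)
    (h : SSeq σ A (SForm.bang a F ::ₘ SForm.bang a G ::ₘ Γ) 0 H) :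
    SSeq σ A
      (SForm.bang a (SForm.tensor (SForm.bang a F) (SForm.bang a G)) ::ₘ Γ) 0 H := by
  by_cases hU : σ.UnbI a
  · obtain ⟨u, hu, rfl⟩ := hU
    have w := weak σ hu F G h (Multiset.mem_cons_self _ _)
      (Multiset.mem_cons_of_mem (Multiset.mem_cons_self _ _))
    refine SSeq.copy (unbI_const σ hu) ?_
    refine SSeq.tensorL ?_
    refine SSeq.store ?_
    refine SSeq.store ?_
    have e : (SForm.bang (SIdx.const u) G ::ₘ SForm.bang (SIdx.const u) F ::ₘ
        bigK u F G ::ₘ Γ)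
        = bigK u F G ::ₘ SForm.bang (SIdx.const u) F ::ₘ SForm.bang (SIdx.const u) G ::ₘ Γ := by
      rw [Multiset.cons_swap (SForm.bang (SIdx.const u) G) (SForm.bang (SIdx.const u) F),
        Multiset.cons_swap (SForm.bang (SIdx.const u) G) (bigK u F G),
        Multiset.cons_swap (SForm.bang (SIdx.const u) F) (bigK u F G)]
    show SSeq σ A (SForm.bang (SIdx.const u) G ::ₘ SForm.bang (SIdx.const u) F ::ₘ
        bigK u F G ::ₘ Γ) 0 H
    rw [e]
    exact w
  · refine SSeq.bangL hU ?_
    refine SSeq.tensorL ?_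
    refine SSeq.store ?_
    refine SSeq.store ?_
    rw [Multiset.cons_swap]
    exact h
end

section
/- The right ⊗ macro rule of the domain-aware type system is admissible in the dyadic sequent calculus for SELL^Π: suppose Υ contains only formulas !^u H with u ∈ U, Δ and Δ' contain only formulas !^c H with c ∉ U, and Υ^{⪰b}, Δ^{⪰b}, Δ'^{⪰b} are all defined; if A : Υ^{⪰b}, Δ^{⪰b} : · ⊢ !^b F and A : Υ^{⪰b}, Δ'^{⪰b} : · ⊢ !^b G are derivable, then A : Υ, Δ, Δ' : · ⊢ !^b(!^b F ⊗ !^b G) is derivable. -/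
attribute [local instance] Classical.propDecidable

variable {I : Type}

/-- **Right ⊗ macro rule**: if `Υ` is unbounded, `Δ, Δ'` are linear,
`Υ^{⪰b}, Δ^{⪰b}, Δ'^{⪰b}` are all defined, and
`A : Υ^{⪰b}, Δ^{⪰b} : · ⊢ !^b F` and `A : Υ^{⪰b}, Δ'^{⪰b} : · ⊢ !^b G` are
derivable, then `A : Υ, Δ, Δ' : · ⊢ !^b(!^b F ⊗ !^b G)` is derivable. -/
theorem sell_tensor_right_macro {I : Type} (σ : SSig I) (A : Set (SIdx I × SIdx I))
    (Υ Δ Δ' : Multiset (SForm I)) (b : SIdx I) (F G : SForm I)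
    (hΥ : ∀ H ∈ Υ, unbBang σ H) (hΔ : ∀ H ∈ Δ, linBang σ H)
    (hΔ' : ∀ H ∈ Δ', linBang σ H)
    (dΥ : restrictDef σ A b Υ) (dΔ : restrictDef σ A b Δ)
    (dΔ' : restrictDef σ A b Δ')
    (h1 : SSeq σ A (restrict σ A b Υ + restrict σ A b Δ) 0 (SForm.bang b F))
    (h2 : SSeq σ A (restrict σ A b Υ + restrict σ A b Δ') 0 (SForm.bang b G)) :
    SSeq σ A (Υ + Δ + Δ') 0
      (SForm.bang b (SForm.tensor (SForm.bang b F) (SForm.bang b G))) := by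
  apply SSeq.bangR
  · intro H hH
    rcases Multiset.mem_add.1 hH with h | h
    · rcases Multiset.mem_add.1 h with h | h
      · exact dΥ H h
      · exact dΔ H h
    · exact dΔ' H h
  · have hr : restrict σ A b (Υ + Δ + Δ') =
        restrict σ A b Υ + restrict σ A b Δ + restrict σ A b Δ' := by
      simp [restrict, Multiset.filter_add]
    rw [hr]
    have := SSeq.tensorR (σ := σ) (A := A) (Υ := restrict σ A b Υ)
      (Δ := restrict σ A b Δ) (Δ' := restrict σ A b Δ') (Ψ := 0) (Ψ' := 0)
      (fun H hH => hΥ H (Multiset.mem_of_mem_filter hH))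
      (fun H hH => hΔ H (Multiset.mem_of_mem_filter hH))
      (fun H hH => hΔ' H (Multiset.mem_of_mem_filter hH)) h1 h2
    simpa using this
end

section
/- Let sv, c ∈ I_l be two locations, let A = 1 ⊗ 1, and let W be the pre-process W = x_c(y).x_c⟨z⟩.(0 ‖ y_c(k).0). Then the judgment A : · ⊢ sv[W] :: x^c_sv : A ⊸ A (with empty channel context, where the located type on x is !^sv(!^c(!^c 1 ⊗ !^c 1) ⊸ !^sv(!^sv 1 ⊗ !^sv 1))) is derivable if and only if sv ⪯_l c. In particular, a server that stores a value received from the client for later use is typable only when the client's location is accessible from the server's location. -/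
attribute [local instance] Classical.propDecidable

/-- Locations over a base set `L` of concrete locations: `base a` is a location
`a ∈ I_l`, `unb x` is `x!` (the unbounded copy), `meet x y` is `x ⊓ y`, and
`var α` is a location variable. -/
inductive ELoc (L : Type) where
  | base : L → ELoc L
  | unb : ELoc L → ELoc L
  | meet : ELoc L → ELoc L → ELoc L
  | var : ℕ → ELoc L

namespace ELoc

def substV {L : Type} : ELoc L → ℕ → ELoc L → ELoc L
  | base a, _, _ => base a
  | unb x, n, l => unb (x.substV n l)
  | meet x y, n, l => meet (x.substV n l) (y.substV n l)
  | var m, n, l => if m = n then l else var m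

def vars {L : Type} : ELoc L → Set ℕ
  | base _ => ∅
  | unb x => x.vars
  | meet x y => x.vars ∪ y.vars
  | var n => {n}

/-- A location is unbounded if it is of the form `a!`. -/
def isUnb {L : Type} : ELoc L → Prop
  | unb _ => True
  | _ => False

end ELoc

/-- The preorder ⪯ on locations generated over the base preorder `le` on `I_l`
by: `a ⪯ b` iff `a ⪯_l b`; `a ⪯ a!`; `a! ⪯ b!` whenever `a ⪯ b`;
`a⊓b = b⊓a`; `a⊓b ⪯ a`; and `a = a⊓a`. -/
inductive LocLe {L : Type} (le : L → L → Prop) : ELoc L → ELoc L → Prop where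
  | base {a b : L} : le a b → LocLe le (.base a) (.base b)
  | to_unb (x : ELoc L) : LocLe le x (.unb x)
  | unb_mono {x y : ELoc L} : LocLe le x y → LocLe le (.unb x) (.unb y)
  | meet_le (x y : ELoc L) : LocLe le (.meet x y) x
  | meet_comm (x y : ELoc L) : LocLe le (.meet x y) (.meet y x)
  | meet_idem (x : ELoc L) : LocLe le x (.meet x x)
  | refl (x : ELoc L) : LocLe le x x
  | trans {x y z : ELoc L} : LocLe le x y → LocLe le y z → LocLe le x z

/-- The order on locations extended by the typing judgments in `𝒜`
(`(l, s) ∈ 𝒜` is read as `l : s`, i.e. `l ⪯ s`). -/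
def LeA {L : Type} (le : L → L → Prop) (𝒜 : Set (ELoc L × ELoc L)) :
    ELoc L → ELoc L → Prop :=
  Relation.ReflTransGen (fun x y => LocLe le x y ∨ (x, y) ∈ 𝒜)

/-- Types: SELL^Π formulas (every subformula of a well-formed type is implicitly
located; explicit migration is recorded by `bang`). -/
inductive Ty (L : Type) where
  | one : Ty L
  | atom : ℕ → Ty L
  | tensor : Ty L → Ty L → Ty L
  | limp : Ty L → Ty L → Ty L
  | oplus : Ty L → Ty L → Ty L
  | with_ : Ty L → Ty L → Ty L
  | bang : ELoc L → Ty L → Ty L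
  /-- ⋒ α:s. A (universal location quantifier, named binder) -/
  | cap : ℕ → ELoc L → Ty L → Ty L
  /-- ⋓ α:s. A (existential location quantifier, named binder) -/
  | cup : ℕ → ELoc L → Ty L → Ty L

namespace Ty

/-- Substitution of a location for a free location variable in a type. -/
def substV {L : Type} : Ty L → ℕ → ELoc L → Ty L
  | one, _, _ => one
  | atom n, _, _ => atom n
  | tensor A B, n, l => tensor (A.substV n l) (B.substV n l)
  | limp A B, n, l => limp (A.substV n l) (B.substV n l)
  | oplus A B, n, l => oplus (A.substV n l) (B.substV n l)
  | with_ A B, n, l => with_ (A.substV n l) (B.substV n l)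
  | bang s A, n, l => bang (s.substV n l) (A.substV n l)
  | cap v s A, n, l => cap v (s.substV n l) (if v = n then A else A.substV n l)
  | cup v s A, n, l => cup v (s.substV n l) (if v = n then A else A.substV n l)

/-- Free location variables of a type. -/
def vars {L : Type} : Ty L → Set ℕ
  | one => ∅
  | atom _ => ∅
  | tensor A B => A.vars ∪ B.vars
  | limp A B => A.vars ∪ B.vars
  | oplus A B => A.vars ∪ B.vars
  | with_ A B => A.vars ∪ B.vars
  | bang s A => s.vars ∪ A.vars
  | cap v s A => s.vars ∪ (A.vars \ {v})
  | cup v s A => s.vars ∪ (A.vars \ {v})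

end Ty

/-- Pre-processes of the domain-aware session π-calculus. -/
inductive Pre (L : Type) where
  | nil : Pre L
  | par : Pre L → Pre L → Pre L
  /-- `x_a⟨y⟩.p`: output of the bound name `y` on `x` towards location `a`. -/
  | out : ℕ → ELoc L → ℕ → Pre L → Pre L
  /-- `x_a(y).p`: input. -/
  | inp : ℕ → ELoc L → ℕ → Pre L → Pre L
  /-- `!x_a(y).p`: replicated input. -/
  | rinp : ℕ → ELoc L → ℕ → Pre L → Pre L
  | nu : ℕ → Pre L → Pre L
  | case : ℕ → ELoc L → Pre L → Pre L → Pre L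
  | inl : ℕ → ELoc L → Pre L → Pre L
  | inr : ℕ → ELoc L → Pre L → Pre L
  /-- `x_a⟨move y to b⟩.p` -/
  | moveOut : ℕ → ELoc L → ℕ → ELoc L → Pre L → Pre L
  /-- `x_a(move y to b).p` -/
  | moveIn : ℕ → ELoc L → ℕ → ELoc L → Pre L → Pre L
  /-- `x_a⟨b⟩.p`: location output. -/
  | locOut : ℕ → ELoc L → ELoc L → Pre L → Pre L
  /-- `x_a(α).p`: location input (binds the location variable `α`). -/
  | locIn : ℕ → ELoc L → ℕ → Pre L → Pre L
  /-- `[x ↔_{a,b} y]`: mediator / copycat. -/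
  | med : ℕ → ELoc L → ELoc L → ℕ → Pre L

/-- Processes: located pre-processes, composed in parallel under restrictions. -/
inductive Proc (L : Type) where
  | loc : ELoc L → Pre L → Proc L
  | nil : Proc L
  | par : Proc L → Proc L → Proc L
  | nu : ℕ → Proc L → Proc L

/-- Rename the name `n`: `rn n y w = if n = y then w else n`. -/
def rn (n y w : ℕ) : ℕ := if n = y then w else n

namespace Pre

/-- Name substitution `p{w/y}` (free occurrences of `y` become `w`). -/
def subn {L : Type} : Pre L → ℕ → ℕ → Pre L
  | nil, _, _ => nil
  | par p q, y, w => par (p.subn y w) (q.subn y w)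
  | out x a z p, y, w => out (rn x y w) a z (if z = y then p else p.subn y w)
  | inp x a z p, y, w => inp (rn x y w) a z (if z = y then p else p.subn y w)
  | rinp x a z p, y, w => rinp (rn x y w) a z (if z = y then p else p.subn y w)
  | nu z p, y, w => nu z (if z = y then p else p.subn y w)
  | case x a p q, y, w => case (rn x y w) a (p.subn y w) (q.subn y w)
  | inl x a p, y, w => inl (rn x y w) a (p.subn y w)
  | inr x a p, y, w => inr (rn x y w) a (p.subn y w)
  | moveOut x a z b p, y, w => moveOut (rn x y w) a z b (if z = y then p else p.subn y w)
  | moveIn x a z b p, y, w => moveIn (rn x y w) a z b (if z = y then p else p.subn y w)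
  | locOut x a b p, y, w => locOut (rn x y w) a b (p.subn y w)
  | locIn x a α p, y, w => locIn (rn x y w) a α (p.subn y w)
  | med x a b z, y, w => med (rn x y w) a b (rn z y w)

/-- Location substitution `p{c/α}` (free occurrences of location variable `α`
become `c`). -/
def subl {L : Type} : Pre L → ℕ → ELoc L → Pre L
  | nil, _, _ => nil
  | par p q, α, c => par (p.subl α c) (q.subl α c)
  | out x a z p, α, c => out x (a.substV α c) z (p.subl α c)
  | inp x a z p, α, c => inp x (a.substV α c) z (p.subl α c)
  | rinp x a z p, α, c => rinp x (a.substV α c) z (p.subl α c)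
  | nu z p, α, c => nu z (p.subl α c)
  | case x a p q, α, c => case x (a.substV α c) (p.subl α c) (q.subl α c)
  | inl x a p, α, c => inl x (a.substV α c) (p.subl α c)
  | inr x a p, α, c => inr x (a.substV α c) (p.subl α c)
  | moveOut x a z b p, α, c => moveOut x (a.substV α c) z (b.substV α c) (p.subl α c)
  | moveIn x a z b p, α, c => moveIn x (a.substV α c) z (b.substV α c) (p.subl α c)
  | locOut x a b p, α, c => locOut x (a.substV α c) (b.substV α c) (p.subl α c)
  | locIn x a β p, α, c => locIn x (a.substV α c) β (if β = α then p else p.subl α c)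
  | med x a b z, α, c => med x (a.substV α c) (b.substV α c) z

/-- Free (channel) names of a pre-process. -/
def fn {L : Type} : Pre L → Set ℕ
  | nil => ∅
  | par p q => p.fn ∪ q.fn
  | out x _ y p => insert x (p.fn \ {y})
  | inp x _ y p => insert x (p.fn \ {y})
  | rinp x _ y p => insert x (p.fn \ {y})
  | nu x p => p.fn \ {x}
  | case x _ p q => insert x (p.fn ∪ q.fn)
  | inl x _ p => insert x p.fn
  | inr x _ p => insert x p.fn
  | moveOut x _ y _ p => insert x (p.fn \ {y})
  | moveIn x _ y _ p => insert x (p.fn \ {y})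
  | locOut x _ _ p => insert x p.fn
  | locIn x _ _ p => insert x p.fn
  | med x _ _ y => {x, y}

/-- All channel names occurring in a pre-process (free or bound). -/
def names {L : Type} : Pre L → Set ℕ
  | nil => ∅
  | par p q => p.names ∪ q.names
  | out x _ y p => insert x (insert y p.names)
  | inp x _ y p => insert x (insert y p.names)
  | rinp x _ y p => insert x (insert y p.names)
  | nu x p => insert x p.names
  | case x _ p q => insert x (p.names ∪ q.names)
  | inl x _ p => insert x p.names
  | inr x _ p => insert x p.names
  | moveOut x _ y _ p => insert x (insert y p.names)
  | moveIn x _ y _ p => insert x (insert y p.names)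
  | locOut x _ _ p => insert x p.names
  | locIn x _ _ p => insert x p.names
  | med x _ _ y => {x, y}

/-- Free location variables of a pre-process. -/
def lvars {L : Type} : Pre L → Set ℕ
  | nil => ∅
  | par p q => p.lvars ∪ q.lvars
  | out _ a _ p => a.vars ∪ p.lvars
  | inp _ a _ p => a.vars ∪ p.lvars
  | rinp _ a _ p => a.vars ∪ p.lvars
  | nu _ p => p.lvars
  | case _ a p q => a.vars ∪ p.lvars ∪ q.lvars
  | inl _ a p => a.vars ∪ p.lvars
  | inr _ a p => a.vars ∪ p.lvars
  | moveOut _ a _ b p => a.vars ∪ b.vars ∪ p.lvars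
  | moveIn _ a _ b p => a.vars ∪ b.vars ∪ p.lvars
  | locOut _ a b p => a.vars ∪ b.vars ∪ p.lvars
  | locIn _ a α p => a.vars ∪ (p.lvars \ {α})
  | med _ a b _ => a.vars ∪ b.vars

end Pre

namespace Proc

def subn {L : Type} : Proc L → ℕ → ℕ → Proc L
  | loc a p, y, w => loc a (p.subn y w)
  | nil, _, _ => nil
  | par P Q, y, w => par (P.subn y w) (Q.subn y w)
  | nu x P, y, w => nu x (if x = y then P else P.subn y w)

def fn {L : Type} : Proc L → Set ℕ
  | loc _ p => p.fn
  | nil => ∅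
  | par P Q => P.fn ∪ Q.fn
  | nu x P => P.fn \ {x}

def names {L : Type} : Proc L → Set ℕ
  | loc _ p => p.names
  | nil => ∅
  | par P Q => P.names ∪ Q.names
  | nu x P => insert x P.names

end Proc

/-- Structural congruence on pre-processes (Fig. 3): least congruence containing
α-conversion, the commutative monoid laws for `‖` with unit `0`, the `ν`-laws
and scope extrusion. -/
inductive PreCong {L : Type} : Pre L → Pre L → Prop where
  | par_nil (p : Pre L) : PreCong (.par p .nil) p
  | par_comm (p q : Pre L) : PreCong (.par p q) (.par q p)
  | par_assoc (p q r : Pre L) : PreCong (.par p (.par q r)) (.par (.par p q) r)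
  | nu_nil (x : ℕ) : PreCong (.nu x .nil) (.nil : Pre L)
  | nu_swap (x y : ℕ) (p : Pre L) : PreCong (.nu x (.nu y p)) (.nu y (.nu x p))
  | scope (p q : Pre L) (y : ℕ) : y ∉ p.fn →
      PreCong (.par p (.nu y q)) (.nu y (.par p q))
  | alpha_nu (x y : ℕ) (p : Pre L) : y ∉ p.fn →
      PreCong (.nu x p) (.nu y (p.subn x y))
  | alpha_out (x : ℕ) (a : ELoc L) (z y : ℕ) (p : Pre L) : y ∉ p.fn →
      PreCong (.out x a z p) (.out x a y (p.subn z y))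
  | alpha_inp (x : ℕ) (a : ELoc L) (z y : ℕ) (p : Pre L) : y ∉ p.fn →
      PreCong (.inp x a z p) (.inp x a y (p.subn z y))
  | alpha_rinp (x : ℕ) (a : ELoc L) (z y : ℕ) (p : Pre L) : y ∉ p.fn →
      PreCong (.rinp x a z p) (.rinp x a y (p.subn z y))
  | alpha_moveOut (x : ℕ) (a : ELoc L) (z : ℕ) (b : ELoc L) (y : ℕ) (p : Pre L) :
      y ∉ p.fn → PreCong (.moveOut x a z b p) (.moveOut x a y b (p.subn z y))
  | alpha_moveIn (x : ℕ) (a : ELoc L) (z : ℕ) (b : ELoc L) (y : ℕ) (p : Pre L) :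
      y ∉ p.fn → PreCong (.moveIn x a z b p) (.moveIn x a y b (p.subn z y))
  | alpha_locIn (x : ℕ) (a : ELoc L) (α β : ℕ) (p : Pre L) : β ∉ p.lvars →
      PreCong (.locIn x a α p) (.locIn x a β (p.subl α (.var β)))
  | refl (p : Pre L) : PreCong p p
  | symm {p q : Pre L} : PreCong p q → PreCong q p
  | trans {p q r : Pre L} : PreCong p q → PreCong q r → PreCong p r
  | par_congr {p p' q q' : Pre L} : PreCong p p' → PreCong q q' →
      PreCong (.par p q) (.par p' q')
  | nu_congr (x : ℕ) {p q : Pre L} : PreCong p q → PreCong (.nu x p) (.nu x q)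
  | out_congr (x : ℕ) (a : ELoc L) (y : ℕ) {p q : Pre L} : PreCong p q →
      PreCong (.out x a y p) (.out x a y q)
  | inp_congr (x : ℕ) (a : ELoc L) (y : ℕ) {p q : Pre L} : PreCong p q →
      PreCong (.inp x a y p) (.inp x a y q)
  | rinp_congr (x : ℕ) (a : ELoc L) (y : ℕ) {p q : Pre L} : PreCong p q →
      PreCong (.rinp x a y p) (.rinp x a y q)
  | case_congr (x : ℕ) (a : ELoc L) {p p' q q' : Pre L} : PreCong p p' →
      PreCong q q' → PreCong (.case x a p q) (.case x a p' q')
  | inl_congr (x : ℕ) (a : ELoc L) {p q : Pre L} : PreCong p q →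
      PreCong (.inl x a p) (.inl x a q)
  | inr_congr (x : ℕ) (a : ELoc L) {p q : Pre L} : PreCong p q →
      PreCong (.inr x a p) (.inr x a q)
  | moveOut_congr (x : ℕ) (a : ELoc L) (y : ℕ) (b : ELoc L) {p q : Pre L} :
      PreCong p q → PreCong (.moveOut x a y b p) (.moveOut x a y b q)
  | moveIn_congr (x : ℕ) (a : ELoc L) (y : ℕ) (b : ELoc L) {p q : Pre L} :
      PreCong p q → PreCong (.moveIn x a y b p) (.moveIn x a y b q)
  | locOut_congr (x : ℕ) (a b : ELoc L) {p q : Pre L} : PreCong p q →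
      PreCong (.locOut x a b p) (.locOut x a b q)
  | locIn_congr (x : ℕ) (a : ELoc L) (α : ℕ) {p q : Pre L} : PreCong p q →
      PreCong (.locIn x a α p) (.locIn x a α q)

/-- Structural congruence on processes (Fig. 3). -/
inductive ProcCong {L : Type} : Proc L → Proc L → Prop where
  | loc_nil (a : ELoc L) : ProcCong (.loc a .nil) .nil
  | loc_par (a : ELoc L) (p q : Pre L) :
      ProcCong (.loc a (.par p q)) (.par (.loc a p) (.loc a q))
  | loc_nu (a : ELoc L) (y : ℕ) (p : Pre L) :
      ProcCong (.loc a (.nu y p)) (.nu y (.loc a p))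
  | par_nil (P : Proc L) : ProcCong (.par P .nil) P
  | par_comm (P Q : Proc L) : ProcCong (.par P Q) (.par Q P)
  | par_assoc (P Q R : Proc L) : ProcCong (.par P (.par Q R)) (.par (.par P Q) R)
  | nu_nil (x : ℕ) : ProcCong (.nu x .nil) (.nil : Proc L)
  | nu_swap (x y : ℕ) (P : Proc L) : ProcCong (.nu x (.nu y P)) (.nu y (.nu x P))
  | scope (P Q : Proc L) (x : ℕ) : x ∉ P.fn →
      ProcCong (.par P (.nu x Q)) (.nu x (.par P Q))
  | med_swap (x : ℕ) (a b : ELoc L) (y : ℕ) :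
      ProcCong (.loc a (.med x a b y)) (.loc b (.med y b a x))
  | alpha (x y : ℕ) (P : Proc L) : y ∉ P.fn →
      ProcCong (.nu x P) (.nu y (P.subn x y))
  | loc_congr (a : ELoc L) {p q : Pre L} : PreCong p q →
      ProcCong (.loc a p) (.loc a q)
  | par_congr {P P' Q Q' : Proc L} : ProcCong P P' → ProcCong Q Q' →
      ProcCong (.par P Q) (.par P' Q')
  | nu_congr (x : ℕ) {P Q : Proc L} : ProcCong P Q → ProcCong (.nu x P) (.nu x Q)
  | refl (P : Proc L) : ProcCong P P
  | symm {P Q : Proc L} : ProcCong P Q → ProcCong Q P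
  | trans {P Q R : Proc L} : ProcCong P Q → ProcCong Q R → ProcCong P R

/-- The reduction relation `→` on processes (Fig. 3). -/
inductive Red {L : Type} : Proc L → Proc L → Prop where
  | comm (a b : ELoc L) (x y z : ℕ) (p q : Pre L) :
      Red (.par (.loc a (.out x b y p)) (.loc b (.inp x a z q)))
          (.nu y (.par (.loc a p) (.loc b (q.subn z y))))
  | rcomm (a b : ELoc L) (x y z : ℕ) (p q : Pre L) :
      Red (.par (.loc a (.out x b y p)) (.loc b (.rinp x a z q)))
          (.par (.nu y (.par (.loc a p) (.loc b (q.subn z y))))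
                (.loc b (.rinp x a z q)))
  | locout (a b c : ELoc L) (x : ℕ) (α : ℕ) (p q : Pre L) :
      Red (.par (.loc a (.locOut x b c p)) (.loc b (.locIn x a α q)))
          (.par (.loc a p) (.loc b (q.subl α c)))
  | move (a b c : ELoc L) (x y y' : ℕ) (p q : Pre L) :
      Red (.par (.loc a (.moveOut x b y c p)) (.loc b (.moveIn x a y' c q)))
          (.nu y (.loc c (.par p (q.subn y' y))))
  | lcase (a b : ELoc L) (x : ℕ) (p q₁ q₂ : Pre L) :
      Red (.par (.loc a (.inl x b p)) (.loc b (.case x a q₁ q₂)))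
          (.par (.loc a p) (.loc b q₁))
  | rcase (a b : ELoc L) (x : ℕ) (p q₁ q₂ : Pre L) :
      Red (.par (.loc a (.inr x b p)) (.loc b (.case x a q₁ q₂)))
          (.par (.loc a p) (.loc b q₂))
  | idred (a b : ELoc L) (x y : ℕ) (P : Proc L) :
      Red (.nu x (.par (.loc a (.med x a b y)) P)) (P.subn x y)
  | res (y : ℕ) {P Q : Proc L} : Red P Q → Red (.nu y P) (.nu y Q)
  | parc (P : Proc L) {Q Q' : Proc L} : Red Q Q' → Red (.par P Q) (.par P Q')
  | congr {P P' Q Q' : Proc L} : ProcCong P P' → Red P' Q' → ProcCong Q' Q →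
      Red P Q

/-- A typed channel `x^d_c : A`: channel `x` offers service `A` at location `c`
(`site`), to be used from location `d` (`user`). -/
structure TChan (L : Type) where
  ch : ℕ
  user : ELoc L
  site : ELoc L
  ty : Ty L

namespace TChan

def vars {L : Type} (c : TChan L) : Set ℕ := c.user.vars ∪ c.site.vars ∪ c.ty.vars

/-- Rename the channel name `y` to `w`. -/
def subn {L : Type} (c : TChan L) (y w : ℕ) : TChan L :=
  ⟨rn c.ch y w, c.user, c.site, c.ty⟩

end TChan

/-- All channels of `Γ` are located at unbounded locations. -/
def unbCtx {L : Type} (Γ : Multiset (TChan L)) : Prop := ∀ c ∈ Γ, c.site.isUnb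

/-- All channels of `Γ` are located at linear locations. -/
def linCtx {L : Type} (Γ : Multiset (TChan L)) : Prop := ∀ c ∈ Γ, ¬ c.site.isUnb

/-- `Γ^{⪰ b}` is defined. -/
def rDef {L : Type} (le : L → L → Prop) (𝒜 : Set (ELoc L × ELoc L)) (b : ELoc L)
    (Γ : Multiset (TChan L)) : Prop :=
  ∀ c ∈ Γ, c.site.isUnb ∨ LeA le 𝒜 b c.site

/-- The restricted context `Γ^{⪰ b}`. -/
noncomputable def rGe {L : Type} (le : L → L → Prop) (𝒜 : Set (ELoc L × ELoc L))
    (b : ELoc L) (Γ : Multiset (TChan L)) : Multiset (TChan L) :=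
  Γ.filter (fun c => LeA le 𝒜 b c.site)

/-- `α` is a fresh location variable. -/
def varFresh {L : Type} (α : ℕ) (𝒜 : Set (ELoc L × ELoc L))
    (Γ : Multiset (TChan L)) (T : TChan L) : Prop :=
  (∀ pr ∈ 𝒜, α ∉ pr.1.vars ∧ α ∉ pr.2.vars) ∧ (∀ c ∈ Γ, α ∉ c.vars) ∧ α ∉ T.vars

/-- The domain-aware type system: `Typing le cutOK idAtom 𝒜 Γ P T` is the
judgment `𝒜 : Γ ⊢ P :: T`. If `cutOK = false` the rule `[Cut]` is forbidden;
if `idAtom = true` the mediator rule `[Id]` may only be applied to atomic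
propositions. -/
inductive Typing {L : Type} (le : L → L → Prop) (cutOK idAtom : Bool) :
    Set (ELoc L × ELoc L) → Multiset (TChan L) → Proc L → TChan L → Prop where
  | id {𝒜 Γ} {x y : ℕ} {a b : ELoc L} {A : Ty L} :
      (idAtom = true → ∃ n, A = Ty.atom n) →
      Typing le cutOK idAtom 𝒜 (⟨x, a, b, A⟩ ::ₘ Γ) (.loc a (.med x a b y)) ⟨y, b, a, A⟩
  | oneL {𝒜 Γ P T} {x : ℕ} {a b : ELoc L} :
      Typing le cutOK idAtom 𝒜 Γ P T →
      Typing le cutOK idAtom 𝒜 (⟨x, b, a, Ty.one⟩ ::ₘ Γ) P T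
  | oneR {𝒜 Υ} {x : ℕ} {a b : ELoc L} : unbCtx Υ →
      Typing le cutOK idAtom 𝒜 Υ (.loc b .nil) ⟨x, a, b, Ty.one⟩
  | tensorL {𝒜 Γ T} {x y : ℕ} {a b : ELoc L} {A B : Ty L} {p : Pre L} :
      Typing le cutOK idAtom 𝒜 (⟨x, b, a, B⟩ ::ₘ ⟨y, b, a, A⟩ ::ₘ Γ) (.loc b p) T →
      Typing le cutOK idAtom 𝒜 (⟨x, b, a, Ty.tensor A B⟩ ::ₘ Γ) (.loc b (.inp x a y p)) T
  | tensorR {𝒜 Υ Δ Δ'} {x y : ℕ} {a b : ELoc L} {A B : Ty L} {p q : Pre L} :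
      unbCtx Υ → linCtx Δ → linCtx Δ' →
      rDef le 𝒜 b Δ → rDef le 𝒜 b Δ' →
      Typing le cutOK idAtom 𝒜 (rGe le 𝒜 b Υ + rGe le 𝒜 b Δ) (.loc b p) ⟨y, a, b, A⟩ →
      Typing le cutOK idAtom 𝒜 (rGe le 𝒜 b Υ + rGe le 𝒜 b Δ') (.loc b q) ⟨x, a, b, B⟩ →
      Typing le cutOK idAtom 𝒜 (Υ + Δ + Δ')
        (.loc b (.out x a y (.par p q))) ⟨x, a, b, Ty.tensor A B⟩
  | limpL {𝒜 Υ Δ Δ' T} {x y : ℕ} {a b : ELoc L} {A B : Ty L} {p q : Pre L} :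
      unbCtx Υ → linCtx Δ → linCtx Δ' →
      Typing le cutOK idAtom 𝒜 (Υ + Δ) (.loc b p) ⟨y, a, b, A⟩ →
      Typing le cutOK idAtom 𝒜 (⟨x, b, a, B⟩ ::ₘ (Υ + Δ')) (.loc b q) T →
      Typing le cutOK idAtom 𝒜 (⟨x, b, a, Ty.limp A B⟩ ::ₘ (Υ + Δ + Δ'))
        (.loc b (.out x a y (.par p q))) T
  | limpR {𝒜 Γ} {x y : ℕ} {a b : ELoc L} {A B : Ty L} {p : Pre L} :
      rDef le 𝒜 b Γ →
      Typing le cutOK idAtom 𝒜 (⟨y, b, a, A⟩ ::ₘ rGe le 𝒜 b Γ) (.loc b p) ⟨x, a, b, B⟩ →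
      Typing le cutOK idAtom 𝒜 Γ (.loc b (.inp x a y p)) ⟨x, a, b, Ty.limp A B⟩
  | oplusL {𝒜 Γ T} {x : ℕ} {a b : ELoc L} {A B : Ty L} {p q : Pre L} :
      Typing le cutOK idAtom 𝒜 (⟨x, b, a, A⟩ ::ₘ Γ) (.loc b p) T →
      Typing le cutOK idAtom 𝒜 (⟨x, b, a, B⟩ ::ₘ Γ) (.loc b q) T →
      Typing le cutOK idAtom 𝒜 (⟨x, b, a, Ty.oplus A B⟩ ::ₘ Γ) (.loc b (.case x a p q)) T
  | oplusR1 {𝒜 Γ} {x : ℕ} {a b : ELoc L} {A B : Ty L} {p : Pre L} :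
      rDef le 𝒜 b Γ →
      Typing le cutOK idAtom 𝒜 (rGe le 𝒜 b Γ) (.loc b p) ⟨x, a, b, A⟩ →
      Typing le cutOK idAtom 𝒜 Γ (.loc b (.inl x a p)) ⟨x, a, b, Ty.oplus A B⟩
  | oplusR2 {𝒜 Γ} {x : ℕ} {a b : ELoc L} {A B : Ty L} {p : Pre L} :
      rDef le 𝒜 b Γ →
      Typing le cutOK idAtom 𝒜 (rGe le 𝒜 b Γ) (.loc b p) ⟨x, a, b, B⟩ →
      Typing le cutOK idAtom 𝒜 Γ (.loc b (.inr x a p)) ⟨x, a, b, Ty.oplus A B⟩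
  | withL1 {𝒜 Γ T} {x : ℕ} {a b : ELoc L} {A B : Ty L} {p : Pre L} :
      Typing le cutOK idAtom 𝒜 (⟨x, b, a, A⟩ ::ₘ Γ) (.loc b p) T →
      Typing le cutOK idAtom 𝒜 (⟨x, b, a, Ty.with_ A B⟩ ::ₘ Γ) (.loc b (.inl x a p)) T
  | withL2 {𝒜 Γ T} {x : ℕ} {a b : ELoc L} {A B : Ty L} {p : Pre L} :
      Typing le cutOK idAtom 𝒜 (⟨x, b, a, B⟩ ::ₘ Γ) (.loc b p) T →
      Typing le cutOK idAtom 𝒜 (⟨x, b, a, Ty.with_ A B⟩ ::ₘ Γ) (.loc b (.inr x a p)) T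
  | withR {𝒜 Γ} {x : ℕ} {a b : ELoc L} {A B : Ty L} {p q : Pre L} :
      rDef le 𝒜 b Γ →
      Typing le cutOK idAtom 𝒜 (rGe le 𝒜 b Γ) (.loc b p) ⟨x, a, b, A⟩ →
      Typing le cutOK idAtom 𝒜 (rGe le 𝒜 b Γ) (.loc b q) ⟨x, a, b, B⟩ →
      Typing le cutOK idAtom 𝒜 Γ (.loc b (.case x a p q)) ⟨x, a, b, Ty.with_ A B⟩
  | bangL {𝒜 Γ T} {x y : ℕ} {a b c : ELoc L} {A : Ty L} {p : Pre L} :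
      Typing le cutOK idAtom 𝒜 (⟨y, c, c, A⟩ ::ₘ Γ) (.loc c p) T →
      Typing le cutOK idAtom 𝒜 (⟨x, b, a, Ty.bang c A⟩ ::ₘ Γ)
        (.loc b (.moveIn x a y c p)) T
  | bangR {𝒜 Γ} {x y : ℕ} {a b c : ELoc L} {A : Ty L} {p : Pre L} :
      rDef le 𝒜 b Γ →
      Typing le cutOK idAtom 𝒜 (rGe le 𝒜 b Γ) (.loc c p) ⟨y, c, c, A⟩ →
      Typing le cutOK idAtom 𝒜 Γ (.loc b (.moveOut x a y c p)) ⟨x, a, b, Ty.bang c A⟩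
  | cupL {𝒜 Γ T} {x : ℕ} {a b : ELoc L} {v α : ℕ} {A : Ty L} {p : Pre L} :
      varFresh α 𝒜 Γ T →
      Typing le cutOK idAtom (insert (ELoc.var α, ELoc.meet a b) 𝒜)
        (⟨x, b, a, A.substV v (ELoc.var α)⟩ ::ₘ Γ) (.loc b p) T →
      Typing le cutOK idAtom 𝒜 (⟨x, b, a, Ty.cup v (ELoc.meet a b) A⟩ ::ₘ Γ)
        (.loc b (.locIn x a α p)) T
  | cupR {𝒜 Γ} {x : ℕ} {a b l : ELoc L} {v : ℕ} {A : Ty L} {p : Pre L} :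
      rDef le 𝒜 b Γ → LeA le 𝒜 l (ELoc.meet a b) →
      Typing le cutOK idAtom 𝒜 (rGe le 𝒜 b Γ) (.loc b p) ⟨x, a, b, A.substV v l⟩ →
      Typing le cutOK idAtom 𝒜 Γ (.loc b (.locOut x a l p))
        ⟨x, a, b, Ty.cup v (ELoc.meet a b) A⟩
  | capL {𝒜 Γ T} {x : ℕ} {a b l : ELoc L} {v : ℕ} {A : Ty L} {p : Pre L} :
      LeA le 𝒜 l (ELoc.meet a b) →
      Typing le cutOK idAtom 𝒜 (⟨x, b, a, A.substV v l⟩ ::ₘ Γ) (.loc b p) T →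
      Typing le cutOK idAtom 𝒜 (⟨x, b, a, Ty.cap v (ELoc.meet a b) A⟩ ::ₘ Γ)
        (.loc b (.locOut x a l p)) T
  | capR {𝒜 Γ} {x : ℕ} {a b : ELoc L} {v α : ℕ} {A : Ty L} {p : Pre L} :
      varFresh α 𝒜 Γ ⟨x, a, b, Ty.cap v (ELoc.meet a b) A⟩ → rDef le 𝒜 b Γ →
      Typing le cutOK idAtom (insert (ELoc.var α, ELoc.meet a b) 𝒜)
        (rGe le 𝒜 b Γ) (.loc b p) ⟨x, a, b, A.substV v (ELoc.var α)⟩ →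
      Typing le cutOK idAtom 𝒜 Γ (.loc b (.locIn x a α p))
        ⟨x, a, b, Ty.cap v (ELoc.meet a b) A⟩
  | copy {𝒜 Γ T} {x y : ℕ} {a b : ELoc L} {A : Ty L} {p : Pre L} :
      Typing le cutOK idAtom 𝒜
        (⟨x, b, ELoc.unb a, Ty.bang a A⟩ ::ₘ ⟨y, b, a, A⟩ ::ₘ Γ) (.loc b p) T →
      Typing le cutOK idAtom 𝒜 (⟨x, b, ELoc.unb a, Ty.bang a A⟩ ::ₘ Γ)
        (.loc b (.out x a y p)) T
  | bangPlusR {𝒜 Υ} {x y : ℕ} {a b : ELoc L} {A : Ty L} {p : Pre L} :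
      unbCtx Υ →
      Typing le cutOK idAtom 𝒜 (rGe le 𝒜 (ELoc.unb b) Υ) (.loc b p) ⟨y, a, b, A⟩ →
      Typing le cutOK idAtom 𝒜 Υ (.loc b (.rinp x a y p)) ⟨x, a, ELoc.unb b, Ty.bang b A⟩
  | cut {𝒜 Υ Δ Δ' T} {x : ℕ} {a b : ELoc L} {A : Ty L} {P Q : Proc L} :
      cutOK = true → unbCtx Υ → linCtx Δ → linCtx Δ' →
      Typing le cutOK idAtom 𝒜 (Υ + Δ) P ⟨x, b, a, A⟩ →
      Typing le cutOK idAtom 𝒜 (⟨x, b, a, A⟩ ::ₘ (Υ + Δ')) Q T →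
      Typing le cutOK idAtom 𝒜 (Υ + Δ + Δ') (.nu x (.par P Q)) T
  | congr {𝒜 Γ T} {P Q : Proc L} : ProcCong P Q →
      Typing le cutOK idAtom 𝒜 Γ P T →
      Typing le cutOK idAtom 𝒜 Γ Q T

section StoringAux
variable {L : Type}

/-- The fixed extension set used in the theorem. -/
def A0 (le : L → L → Prop) : Set (ELoc L × ELoc L) := {pr | LocLe le pr.1 pr.2}

/-- Upper bounds interpretation of a location. -/
def ubs (le : L → L → Prop) : ELoc L → Set L
  | .base a => {b | le a b}
  | .unb e => ubs le e
  | .meet e f => ubs le e ∪ ubs le f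
  | .var _ => ∅

lemma locle_ubs {le : L → L → Prop} (htrans : ∀ {a b c : L}, le a b → le b c → le a c)
    {u w : ELoc L} (h : LocLe le u w) : ubs le w ⊆ ubs le u := by
  induction h with
  | base hab => intro t ht; simp only [ubs, Set.mem_setOf_eq] at *; exact htrans hab ht
  | to_unb e => intro t ht; simpa [ubs] using ht
  | unb_mono _ ih => intro t ht; exact ih (by simpa [ubs] using ht)
  | meet_le e f => intro t ht; simp only [ubs]; exact Or.inl ht
  | meet_comm e f => intro t ht; simp only [ubs, Set.mem_union] at *; tauto
  | meet_idem e => intro t ht; simp only [ubs, Set.mem_union] at ht; tauto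
  | refl e => exact subset_rfl
  | trans _ _ ih1 ih2 => exact ih2.trans ih1

lemma leA_ubs {le : L → L → Prop} (htrans : ∀ {a b c : L}, le a b → le b c → le a c)
    {u w : ELoc L} (h : LeA le (A0 le) u w) : ubs le w ⊆ ubs le u := by
  induction h with
  | refl => exact subset_rfl
  | tail _ hstep ih =>
      refine Set.Subset.trans ?_ ih
      exact locle_ubs (le := le) htrans (hstep.elim id id)

lemma leA_base_base {le : L → L → Prop} (hrefl : ∀ a, le a a)
    (htrans : ∀ {a b c : L}, le a b → le b c → le a c) {sv c : L}
    (h : LeA le (A0 le) (.base sv) (.base c)) : le sv c := by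
  have hsub := leA_ubs (le := le) htrans h
  exact hsub (show c ∈ ubs le (ELoc.base c) from hrefl c)

/-- `p` is structurally inert (a parallel composition of `0`s under restrictions). -/
def pnil : Pre L → Prop
  | .nil => True
  | .par p q => pnil p ∧ pnil q
  | .nu _ p => pnil p
  | .out _ _ _ _ => False
  | .inp _ _ _ _ => False
  | .rinp _ _ _ _ => False
  | .case _ _ _ _ => False
  | .inl _ _ _ => False
  | .inr _ _ _ => False
  | .moveOut _ _ _ _ _ => False
  | .moveIn _ _ _ _ _ => False
  | .locOut _ _ _ _ => False
  | .locIn _ _ _ _ => False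
  | .med _ _ _ _ => False

/-- The unique thread is an output on the free name `x`. -/
def g1 (x : ℕ) : Pre L → Prop
  | .out x' _ _ _ => x' = x
  | .par p q => (g1 x p ∧ pnil q) ∨ (pnil p ∧ g1 x q)
  | .nu w p => w ≠ x ∧ g1 x p
  | .nil => False
  | .inp _ _ _ _ => False
  | .rinp _ _ _ _ => False
  | .case _ _ _ _ => False
  | .inl _ _ _ => False
  | .inr _ _ _ => False
  | .moveOut _ _ _ _ _ => False
  | .moveIn _ _ _ _ _ => False
  | .locOut _ _ _ _ => False
  | .locIn _ _ _ _ => False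
  | .med _ _ _ _ => False

/-- The unique thread is an input on the free name `x` towards `c`, whose
continuation is a `g1`-thread. -/
def g0 (x : ℕ) (c : L) : Pre L → Prop
  | .inp x' a z p => x' = x ∧ a = .base c ∧ z ≠ x ∧ g1 x p
  | .par p q => (g0 x c p ∧ pnil q) ∨ (pnil p ∧ g0 x c q)
  | .nu w p => w ≠ x ∧ g0 x c p
  | .nil => False
  | .out _ _ _ _ => False
  | .rinp _ _ _ _ => False
  | .case _ _ _ _ => False
  | .inl _ _ _ => False
  | .inr _ _ _ => False
  | .moveOut _ _ _ _ _ => False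
  | .moveIn _ _ _ _ _ => False
  | .locOut _ _ _ _ => False
  | .locIn _ _ _ _ => False
  | .med _ _ _ _ => False

lemma pnil_subn (p : Pre L) : ∀ u v, pnil (p.subn u v) ↔ pnil p := by
  induction p with
  | par p q ihp ihq => intro u v; simp [Pre.subn, pnil, ihp, ihq]
  | nu z p ih => intro u v; by_cases h : z = u <;> simp [Pre.subn, pnil, h, ih]
  | _ => intro u v; simp [Pre.subn, pnil]

lemma g1_fn {x : ℕ} (p : Pre L) (h : g1 x p) : x ∈ p.fn := by
  induction p with
  | par p q ihp ihq =>
      rcases h with ⟨h, _⟩ | ⟨_, h⟩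
      · exact Or.inl (ihp h)
      · exact Or.inr (ihq h)
  | nu z p ih =>
      obtain ⟨hz, hp⟩ := h
      exact ⟨ih hp, by simpa using Ne.symm hz⟩
  | out x' a z p ih =>
      simp only [g1] at h; subst h; exact Or.inl rfl
  | _ => exact absurd h (by simp [g1])

lemma g0_fn {x : ℕ} {c : L} (p : Pre L) (h : g0 x c p) : x ∈ p.fn := by
  induction p with
  | par p q ihp ihq =>
      rcases h with ⟨h, _⟩ | ⟨_, h⟩
      · exact Or.inl (ihp h)
      · exact Or.inr (ihq h)
  | nu z p ih =>
      obtain ⟨hz, hp⟩ := h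
      exact ⟨ih hp, by simpa using Ne.symm hz⟩
  | inp x' a z p ih =>
      obtain ⟨hx, _, _, _⟩ := h; subst hx; exact Or.inl rfl
  | _ => exact absurd h (by simp [g0])

lemma g1_subn {x : ℕ} (p : Pre L) : ∀ u v, v ≠ x → (g1 x (p.subn u v) ↔ (u ≠ x ∧ g1 x p)) := by
  induction p with
  | par p q ihp ihq =>
      intro u v hv
      simp only [Pre.subn, g1, ihp u v hv, ihq u v hv, pnil_subn]
      tauto
  | nu z p ih =>
      intro u v hv
      simp only [Pre.subn, g1]
      by_cases h : z = u
      · simp only [if_pos h]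
        subst h
        constructor
        · rintro ⟨hz, hp⟩; exact ⟨hz, hz, hp⟩
        · rintro ⟨_, hz, hp⟩; exact ⟨hz, hp⟩
      · simp only [if_neg h, ih u v hv]; tauto
  | out x' a z p ih =>
      intro u v hv
      simp only [Pre.subn, g1, rn]
      by_cases h : x' = u
      · simp only [if_pos h]
        subst h
        constructor
        · intro hvx; exact absurd hvx hv
        · rintro ⟨hux, hx⟩; exact absurd hx hux
      · simp only [if_neg h]
        constructor
        · intro hx; exact ⟨fun hux => h (hx.trans hux.symm), hx⟩
        · exact fun h' => h'.2
  | _ => intro u v hv; simp [Pre.subn, g1]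

lemma g0_subn {x : ℕ} {c : L} (p : Pre L) :
    ∀ u v, v ≠ x → (g0 x c (p.subn u v) ↔ (u ≠ x ∧ g0 x c p)) := by
  induction p with
  | par p q ihp ihq =>
      intro u v hv
      simp only [Pre.subn, g0, ihp u v hv, ihq u v hv, pnil_subn]
      tauto
  | nu z p ih =>
      intro u v hv
      simp only [Pre.subn, g0]
      by_cases h : z = u
      · simp only [if_pos h]
        subst h
        constructor
        · rintro ⟨hz, hp⟩; exact ⟨hz, hz, hp⟩
        · rintro ⟨_, hz, hp⟩; exact ⟨hz, hp⟩
      · simp only [if_neg h, ih u v hv]; tauto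
  | inp x' a z p ih =>
      intro u v hv
      simp only [Pre.subn, g0, rn]
      by_cases h : x' = u
      · simp only [if_pos h]
        subst h
        constructor
        · rintro ⟨hvx, _⟩; exact absurd hvx hv
        · rintro ⟨hux, hx, _⟩; exact absurd hx hux
      · simp only [if_neg h]
        by_cases hz : z = u
        · simp only [if_pos hz]
          constructor
          · rintro ⟨hx, ha, hzx, hp⟩
            exact ⟨fun hux => h (hx.trans hux.symm), hx, ha, hzx, hp⟩
          · rintro ⟨_, hx, ha, hzx, hp⟩; exact ⟨hx, ha, hzx, hp⟩
        · simp only [if_neg hz]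
          constructor
          · rintro ⟨hx, ha, hzx, hp⟩
            have hux : u ≠ x := fun hux => h (hx.trans hux.symm)
            exact ⟨hux, hx, ha, hzx, ((g1_subn p u v hv).1 hp).2⟩
          · rintro ⟨hux, hx, ha, hzx, hp⟩
            exact ⟨hx, ha, hzx, (g1_subn p u v hv).2 ⟨hux, hp⟩⟩
  | _ => intro u v hv; simp [Pre.subn, g0]

end StoringAux

section StoringAux2
variable {L : Type}

lemma pnil_cong {p q : Pre L} (h : PreCong p q) : pnil p ↔ pnil q := by
  induction h <;> simp_all [pnil, pnil_subn] <;> tauto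

lemma g1_cong {x : ℕ} {p q : Pre L} (h : PreCong p q) : g1 x p ↔ g1 x q := by
  induction h with
  | par_nil p => simp [g1, pnil]
  | par_comm p q => simp only [g1]; tauto
  | par_assoc p q r => simp only [g1, pnil]; tauto
  | nu_nil w => simp [g1]
  | nu_swap w w' p => simp only [g1]; tauto
  | scope p q w hw =>
      simp only [g1, pnil]
      constructor
      · rintro (⟨hp, hq⟩ | ⟨hp, hwx, hq⟩)
        · exact ⟨fun hwx => hw (hwx ▸ g1_fn p hp), Or.inl ⟨hp, hq⟩⟩
        · exact ⟨hwx, Or.inr ⟨hp, hq⟩⟩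
      · rintro ⟨hwx, (⟨hp, hq⟩ | ⟨hp, hq⟩)⟩
        · exact Or.inl ⟨hp, hq⟩
        · exact Or.inr ⟨hp, hwx, hq⟩
  | alpha_nu u v p hv =>
      simp only [g1]
      by_cases hvx : v = x
      · subst hvx
        constructor
        · rintro ⟨hu, hp⟩; exact absurd (g1_fn p hp) hv
        · rintro ⟨hvv, _⟩; exact absurd rfl hvv
      · rw [g1_subn p u v hvx]
        constructor
        · rintro ⟨hu, hp⟩; exact ⟨hvx, hu, hp⟩
        · rintro ⟨_, hu, hp⟩; exact ⟨hu, hp⟩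
  | alpha_out x' a z v p hv => simp [g1]
  | alpha_inp x' a z v p hv => simp [g1]
  | alpha_rinp x' a z v p hv => simp [g1]
  | alpha_moveOut x' a z b v p hv => simp [g1]
  | alpha_moveIn x' a z b v p hv => simp [g1]
  | alpha_locIn x' a α β p hβ => simp [g1]
  | refl p => exact Iff.rfl
  | symm _ ih => exact ih.symm
  | trans _ _ ih1 ih2 => exact ih1.trans ih2
  | par_congr h1 h2 ih1 ih2 => simp only [g1, ih1, ih2, pnil_cong h1, pnil_cong h2]
  | nu_congr w h ih => simp only [g1, ih]
  | out_congr x' a y' h ih => simp [g1]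
  | inp_congr x' a y' h ih => simp [g1]
  | rinp_congr x' a y' h ih => simp [g1]
  | case_congr x' a h1 h2 ih1 ih2 => simp [g1]
  | inl_congr x' a h ih => simp [g1]
  | inr_congr x' a h ih => simp [g1]
  | moveOut_congr x' a y' b h ih => simp [g1]
  | moveIn_congr x' a y' b h ih => simp [g1]
  | locOut_congr x' a b h ih => simp [g1]
  | locIn_congr x' a α h ih => simp [g1]

lemma g0_cong {x : ℕ} {c : L} {p q : Pre L} (h : PreCong p q) : g0 x c p ↔ g0 x c q := by
  induction h with
  | par_nil p => simp [g0, pnil]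
  | par_comm p q => simp only [g0]; tauto
  | par_assoc p q r => simp only [g0, pnil]; tauto
  | nu_nil w => simp [g0]
  | nu_swap w w' p => simp only [g0]; tauto
  | scope p q w hw =>
      simp only [g0, pnil]
      constructor
      · rintro (⟨hp, hq⟩ | ⟨hp, hwx, hq⟩)
        · exact ⟨fun hwx => hw (hwx ▸ g0_fn p hp), Or.inl ⟨hp, hq⟩⟩
        · exact ⟨hwx, Or.inr ⟨hp, hq⟩⟩
      · rintro ⟨hwx, (⟨hp, hq⟩ | ⟨hp, hq⟩)⟩
        · exact Or.inl ⟨hp, hq⟩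
        · exact Or.inr ⟨hp, hwx, hq⟩
  | alpha_nu u v p hv =>
      simp only [g0]
      by_cases hvx : v = x
      · subst hvx
        constructor
        · rintro ⟨hu, hp⟩; exact absurd (g0_fn p hp) hv
        · rintro ⟨hvv, _⟩; exact absurd rfl hvv
      · rw [g0_subn p u v hvx]
        constructor
        · rintro ⟨hu, hp⟩; exact ⟨hvx, hu, hp⟩
        · rintro ⟨_, hu, hp⟩; exact ⟨hu, hp⟩
  | alpha_out x' a z v p hv => simp [g0]
  | alpha_inp x' a z v p hv =>
      simp only [g0]
      by_cases hvx : v = x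
      · subst hvx
        constructor
        · rintro ⟨hx, ha, hz, hp⟩; exact absurd (g1_fn p hp) hv
        · rintro ⟨_, _, hvv, _⟩; exact absurd rfl hvv
      · rw [g1_subn p z v hvx]
        constructor
        · rintro ⟨hx, ha, hz, hp⟩; exact ⟨hx, ha, hvx, hz, hp⟩
        · rintro ⟨hx, ha, _, hz, hp⟩; exact ⟨hx, ha, hz, hp⟩
  | alpha_rinp x' a z v p hv => simp [g0]
  | alpha_moveOut x' a z b v p hv => simp [g0]
  | alpha_moveIn x' a z b v p hv => simp [g0]
  | alpha_locIn x' a α β p hβ => simp [g0]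
  | refl p => exact Iff.rfl
  | symm _ ih => exact ih.symm
  | trans _ _ ih1 ih2 => exact ih1.trans ih2
  | par_congr h1 h2 ih1 ih2 => simp only [g0, ih1, ih2, pnil_cong h1, pnil_cong h2]
  | nu_congr w h ih => simp only [g0, ih]
  | out_congr x' a y' h ih => simp [g0]
  | inp_congr x' a y' h ih => simp only [g0, g1_cong h]
  | rinp_congr x' a y' h ih => simp [g0]
  | case_congr x' a h1 h2 ih1 ih2 => simp [g0]
  | inl_congr x' a h ih => simp [g0]
  | inr_congr x' a h ih => simp [g0]
  | moveOut_congr x' a y' b h ih => simp [g0]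
  | moveIn_congr x' a y' b h ih => simp [g0]
  | locOut_congr x' a b h ih => simp [g0]
  | locIn_congr x' a α h ih => simp [g0]

end StoringAux2

section StoringAux3
variable {L : Type}

/-- Structurally inert processes. -/
def Pn : Proc L → Prop
  | .loc _ p => pnil p
  | .nil => True
  | .par P Q => Pn P ∧ Pn Q
  | .nu _ P => Pn P

/-- Bundle of properties of a single-thread predicate on pre-processes. -/
structure GoodG (x : ℕ) (g : Pre L → Prop) : Prop where
  fn : ∀ p, g p → x ∈ p.fn
  subn : ∀ p u v, v ≠ x → (g (p.subn u v) ↔ (u ≠ x ∧ g p))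
  cong : ∀ {p q : Pre L}, PreCong p q → (g p ↔ g q)
  nil : ¬ g .nil
  par : ∀ p q, g (.par p q) = ((g p ∧ pnil q) ∨ (pnil p ∧ g q))
  nu : ∀ w p, g (.nu w p) = (w ≠ x ∧ g p)
  med : ∀ x' a b y', ¬ g (.med x' a b y')

/-- The process consists of a unique thread satisfying `g`, located at `sv`. -/
def GP (x : ℕ) (sv : L) (g : Pre L → Prop) : Proc L → Prop
  | .loc b p => b = .base sv ∧ g p
  | .nil => False
  | .par P Q => (GP x sv g P ∧ Pn Q) ∨ (Pn P ∧ GP x sv g Q)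
  | .nu w P => w ≠ x ∧ GP x sv g P

lemma Pn_subn (P : Proc L) : ∀ u v, Pn (P.subn u v) ↔ Pn P := by
  induction P with
  | loc a p => intro u v; simp [Proc.subn, Pn, pnil_subn]
  | nil => intro u v; simp [Proc.subn, Pn]
  | par P Q ihP ihQ => intro u v; simp [Proc.subn, Pn, ihP, ihQ]
  | nu w P ih => intro u v; by_cases h : w = u <;> simp [Proc.subn, Pn, h, ih]

lemma GP_fn {x : ℕ} {sv : L} {g : Pre L → Prop} (hg : GoodG x g) (P : Proc L)
    (h : GP x sv g P) : x ∈ P.fn := by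
  induction P with
  | loc a p => exact hg.fn p h.2
  | nil => exact absurd h (by simp [GP])
  | par P Q ihP ihQ =>
      rcases h with ⟨h, _⟩ | ⟨_, h⟩
      · exact Or.inl (ihP h)
      · exact Or.inr (ihQ h)
  | nu w P ih => exact ⟨ih h.2, by simpa using Ne.symm h.1⟩

lemma GP_subn {x : ℕ} {sv : L} {g : Pre L → Prop} (hg : GoodG x g) (P : Proc L) :
    ∀ u v, v ≠ x → (GP x sv g (P.subn u v) ↔ (u ≠ x ∧ GP x sv g P)) := by
  induction P with
  | loc a p => intro u v hv; simp only [Proc.subn, GP, hg.subn p u v hv]; tauto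
  | nil => intro u v hv; simp [Proc.subn, GP]
  | par P Q ihP ihQ =>
      intro u v hv
      simp only [Proc.subn, GP, ihP u v hv, ihQ u v hv, Pn_subn]
      tauto
  | nu w P ih =>
      intro u v hv
      simp only [Proc.subn, GP]
      by_cases h : w = u
      · simp only [if_pos h]
        subst h
        constructor
        · rintro ⟨hw, hP⟩; exact ⟨hw, hw, hP⟩
        · rintro ⟨_, hw, hP⟩; exact ⟨hw, hP⟩
      · simp only [if_neg h, ih u v hv]; tauto

lemma Pn_cong {P Q : Proc L} (h : ProcCong P Q) : Pn P ↔ Pn Q := by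
  induction h with
  | loc_congr a hpq => simpa [Pn] using pnil_cong hpq
  | _ => simp_all [Pn, pnil, Pn_subn] <;> tauto

lemma GP_cong {x : ℕ} {sv : L} {g : Pre L → Prop} (hg : GoodG x g) {P Q : Proc L}
    (h : ProcCong P Q) : GP x sv g P ↔ GP x sv g Q := by
  induction h with
  | loc_nil a => simp [GP, hg.nil]
  | loc_par a p q => simp only [GP, Pn, hg.par]; tauto
  | loc_nu a w p => simp only [GP, hg.nu]; tauto
  | par_nil P => simp [GP, Pn]
  | par_comm P Q => simp only [GP]; tauto
  | par_assoc P Q R => simp only [GP, Pn]; tauto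
  | nu_nil w => simp [GP]
  | nu_swap w w' P => simp only [GP]; tauto
  | scope P Q w hw =>
      simp only [GP, Pn]
      constructor
      · rintro (⟨hP, hQ⟩ | ⟨hP, hwx, hQ⟩)
        · exact ⟨fun hwx => hw (hwx ▸ GP_fn hg P hP), Or.inl ⟨hP, hQ⟩⟩
        · exact ⟨hwx, Or.inr ⟨hP, hQ⟩⟩
      · rintro ⟨hwx, (⟨hP, hQ⟩ | ⟨hP, hQ⟩)⟩
        · exact Or.inl ⟨hP, hQ⟩
        · exact Or.inr ⟨hP, hwx, hQ⟩
  | med_swap x' a b y' =>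
      simp only [GP]
      constructor <;> rintro ⟨_, hm⟩ <;> exact absurd hm (hg.med _ _ _ _)
  | alpha u v P hv =>
      simp only [GP]
      by_cases hvx : v = x
      · subst hvx
        constructor
        · rintro ⟨hu, hP⟩; exact absurd (GP_fn hg P hP) hv
        · rintro ⟨hvv, _⟩; exact absurd rfl hvv
      · rw [GP_subn hg P u v hvx]
        constructor
        · rintro ⟨hu, hP⟩; exact ⟨hvx, hu, hP⟩
        · rintro ⟨_, hu, hP⟩; exact ⟨hu, hP⟩
  | loc_congr a hpq => simp only [GP, hg.cong hpq]
  | par_congr h1 h2 ih1 ih2 => simp only [GP, ih1, ih2, Pn_cong h1, Pn_cong h2]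
  | nu_congr w h ih => simp only [GP, ih]
  | refl P => exact Iff.rfl
  | symm _ ih => exact ih.symm
  | trans _ _ ih1 ih2 => exact ih1.trans ih2

lemma goodG_g1 (x : ℕ) : GoodG (L := L) x (g1 x) :=
  ⟨g1_fn, g1_subn, fun h => g1_cong h, by simp [g1], fun _ _ => rfl, fun _ _ => rfl,
    by intro x' a b y' h; simp [g1] at h⟩

lemma goodG_g0 (x : ℕ) (c : L) : GoodG (L := L) x (g0 x c) :=
  ⟨g0_fn, g0_subn, fun h => g0_cong h, by simp [g0], fun _ _ => rfl, fun _ _ => rfl,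
    by intro x' a b y' h; simp [g0] at h⟩

end StoringAux3

section StoringAux4
variable {L : Type}

/-- An inert process offers `1` and uses only unbounded or `1`-typed channels. -/
lemma Zp {le : L → L → Prop} {ck ia : Bool} {𝒜 : Set (ELoc L × ELoc L)}
    {Γ : Multiset (TChan L)} {P : Proc L} {T : TChan L}
    (h : Typing le ck ia 𝒜 Γ P T) :
    Pn P → T.ty = Ty.one ∧ ∀ ch ∈ Γ, ch.site.isUnb ∨ ch.ty = Ty.one := by
  induction h with
  | oneL h ih =>
      intro hP
      obtain ⟨h1, h2⟩ := ih hP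
      refine ⟨h1, ?_⟩
      intro ch hch
      rcases Multiset.mem_cons.1 hch with rfl | hch
      · exact Or.inr rfl
      · exact h2 ch hch
  | oneR hΥ => intro _; exact ⟨rfl, fun ch hch => Or.inl (hΥ ch hch)⟩
  | cut hck hΥ hΔ hΔ' h1 h2 ih1 ih2 =>
      intro hP
      simp only [Pn] at hP
      obtain ⟨hz1, hz2⟩ := ih1 hP.1
      obtain ⟨hw1, hw2⟩ := ih2 hP.2
      refine ⟨hw1, ?_⟩
      intro ch hch
      rcases Multiset.mem_add.1 hch with hch | hch
      · exact hz2 ch hch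
      · exact hw2 ch (Multiset.mem_cons_of_mem (Multiset.mem_add.2 (Or.inr hch)))
  | congr hc h ih => intro hP; exact ih ((Pn_cong hc).2 hP)
  | id _ => intro hP; exact absurd hP (by simp [Pn, pnil])
  | tensorL _ _ => intro hP; exact absurd hP (by simp [Pn, pnil])
  | tensorR _ _ _ _ _ _ _ _ _ => intro hP; exact absurd hP (by simp [Pn, pnil])
  | limpL _ _ _ _ _ _ _ => intro hP; exact absurd hP (by simp [Pn, pnil])
  | limpR _ _ _ => intro hP; exact absurd hP (by simp [Pn, pnil])
  | oplusL _ _ _ _ => intro hP; exact absurd hP (by simp [Pn, pnil])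
  | oplusR1 _ _ _ => intro hP; exact absurd hP (by simp [Pn, pnil])
  | oplusR2 _ _ _ => intro hP; exact absurd hP (by simp [Pn, pnil])
  | withL1 _ _ => intro hP; exact absurd hP (by simp [Pn, pnil])
  | withL2 _ _ => intro hP; exact absurd hP (by simp [Pn, pnil])
  | withR _ _ _ _ _ => intro hP; exact absurd hP (by simp [Pn, pnil])
  | bangL _ _ => intro hP; exact absurd hP (by simp [Pn, pnil])
  | bangR _ _ _ => intro hP; exact absurd hP (by simp [Pn, pnil])
  | cupL _ _ _ => intro hP; exact absurd hP (by simp [Pn, pnil])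
  | cupR _ _ _ _ => intro hP; exact absurd hP (by simp [Pn, pnil])
  | capL _ _ _ => intro hP; exact absurd hP (by simp [Pn, pnil])
  | capR _ _ _ _ => intro hP; exact absurd hP (by simp [Pn, pnil])
  | copy _ _ => intro hP; exact absurd hP (by simp [Pn, pnil])
  | bangPlusR _ _ _ => intro hP; exact absurd hP (by simp [Pn, pnil])

/-- Stage 1: context has a distinguished `1 ⊗ 1` channel at `c`, the process is
a single output thread on `x` at `sv`, offering `x : 1 ⊗ 1`. -/
lemma M1 {le : L → L → Prop} {x : ℕ} {sv c : L} {𝒜 : Set (ELoc L × ELoc L)}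
    {Γ : Multiset (TChan L)} {P : Proc L} {T : TChan L}
    (h : Typing le true false 𝒜 Γ P T) :
    𝒜 = A0 le →
    (∃ yn Γ₀, Γ = (⟨yn, .base sv, .base c, .tensor .one .one⟩ : TChan L) ::ₘ Γ₀ ∧
        ∀ ch ∈ Γ₀, ch.ty = Ty.one) →
    T = ⟨x, .base c, .base sv, .tensor .one .one⟩ →
    GP x sv (g1 x) P →
    LeA le (A0 le) (.base sv) (.base c) := by
  induction h with
  | id _ => intro _ _ _ hG; exact absurd hG (by simp [GP, g1])
  | oneR _ => intro _ _ _ hG; exact absurd hG (by simp [GP, g1])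
  | tensorL _ _ => intro _ _ _ hG; exact absurd hG (by simp [GP, g1])
  | limpR _ _ _ => intro _ _ hT _; exact absurd hT (by simp)
  | oplusL _ _ _ _ => intro _ _ _ hG; exact absurd hG (by simp [GP, g1])
  | oplusR1 _ _ _ => intro _ _ _ hG; exact absurd hG (by simp [GP, g1])
  | oplusR2 _ _ _ => intro _ _ _ hG; exact absurd hG (by simp [GP, g1])
  | withL1 _ _ => intro _ _ _ hG; exact absurd hG (by simp [GP, g1])
  | withL2 _ _ => intro _ _ _ hG; exact absurd hG (by simp [GP, g1])
  | withR _ _ _ _ _ => intro _ _ _ hG; exact absurd hG (by simp [GP, g1])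
  | bangL _ _ => intro _ _ _ hG; exact absurd hG (by simp [GP, g1])
  | bangR _ _ _ => intro _ _ _ hG; exact absurd hG (by simp [GP, g1])
  | cupL _ _ _ => intro _ _ _ hG; exact absurd hG (by simp [GP, g1])
  | cupR _ _ _ _ => intro _ _ _ hG; exact absurd hG (by simp [GP, g1])
  | capL _ _ _ => intro _ _ _ hG; exact absurd hG (by simp [GP, g1])
  | capR _ _ _ _ => intro _ _ _ hG; exact absurd hG (by simp [GP, g1])
  | bangPlusR _ _ _ => intro _ _ _ hG; exact absurd hG (by simp [GP, g1])
  | oneL h ih =>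
      intro hA hI hT hG
      obtain ⟨yn, Γ₀, hΓ, hone⟩ := hI
      rcases Multiset.cons_eq_cons.1 hΓ with ⟨heq, _⟩ | ⟨_, u, hΓ', hΓ₀⟩
      · simp at heq
      · exact ih hA ⟨yn, u, hΓ', fun ch hch =>
          hone ch (hΓ₀ ▸ Multiset.mem_cons_of_mem hch)⟩ hT hG
  | tensorR hΥ hΔ hΔ' hr hr' h1 h2 ih1 ih2 =>
      intro hA hI hT hG
      rename_i AA Υ Δ Δ' x1 y1 a b A B p q
      obtain ⟨yn, Γ₀, hΓ, hone⟩ := hI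
      simp only [TChan.mk.injEq, Ty.tensor.injEq] at hT
      obtain ⟨hx1, ha, hb, -, -⟩ := hT
      subst ha; subst hb
      have hmem : (⟨yn, .base sv, .base c, .tensor .one .one⟩ : TChan L) ∈ Υ + Δ + Δ' := by
        rw [hΓ]; exact Multiset.mem_cons_self _ _
      rcases Multiset.mem_add.1 hmem with hm | hm
      · rcases Multiset.mem_add.1 hm with hm | hm
        · have := hΥ _ hm; simp [ELoc.isUnb] at this
        · rcases hr _ hm with hu | hle
          · simp [ELoc.isUnb] at hu
          · rw [hA] at hle; exact hle
      · rcases hr' _ hm with hu | hle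
        · simp [ELoc.isUnb] at hu
        · rw [hA] at hle; exact hle
  | limpL hΥ hΔ hΔ' h1 h2 ih1 ih2 =>
      intro hA hI hT hG
      rename_i AA Υ Δ Δ' T' x1 y1 a b A B p q
      obtain ⟨yn, Γ₀, hΓ, hone⟩ := hI
      rcases Multiset.cons_eq_cons.1 hΓ with ⟨heq, _⟩ | ⟨_, u, hΓ', hΓ₀⟩
      · simp at heq
      · have hm : (⟨x1, b, a, Ty.limp A B⟩ : TChan L) ∈ Γ₀ := by
          rw [hΓ₀]; exact Multiset.mem_cons_self _ _
        have := hone _ hm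
        simp at this
  | copy h ih =>
      intro hA hI hT hG
      rename_i AA G1' T' x1 y1 a b A p
      obtain ⟨yn, Γ₀, hΓ, hone⟩ := hI
      rcases Multiset.cons_eq_cons.1 hΓ with ⟨heq, _⟩ | ⟨_, u, hΓ', hΓ₀⟩
      · simp at heq
      · have hm : (⟨x1, b, ELoc.unb a, Ty.bang a A⟩ : TChan L) ∈ Γ₀ := by
          rw [hΓ₀]; exact Multiset.mem_cons_self _ _
        have := hone _ hm
        simp at this
  | cut hck hΥ hΔ hΔ' h1 h2 ih1 ih2 =>
      intro hA hI hT hG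
      rename_i AA Υ Δ Δ' T' x1 a b A P1 Q1
      simp only [GP] at hG
      obtain ⟨hx1, hsplit⟩ := hG
      rcases hsplit with ⟨hGP, hPnQ⟩ | ⟨hPnP, hGQ⟩
      · have hz := Zp h2 hPnQ
        rw [hT] at hz
        exact absurd hz.1 (by simp)
      · have hz := Zp h1 hPnP
        obtain ⟨hzA, hzctx⟩ := hz
        obtain ⟨yn, Γ₀, hΓ, hone⟩ := hI
        have hmem : (⟨yn, .base sv, .base c, .tensor .one .one⟩ : TChan L) ∈ Υ + Δ + Δ' := by
          rw [hΓ]; exact Multiset.mem_cons_self _ _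
        rcases Multiset.mem_add.1 hmem with hm | hm
        · rcases hzctx _ hm with hu | hty
          · simp [ELoc.isUnb] at hu
          · simp at hty
        · obtain ⟨Δ'₀, hD⟩ := Multiset.exists_cons_of_mem hm
          refine ih2 hA ⟨yn, (⟨x1, b, a, A⟩ : TChan L) ::ₘ (Υ + Δ'₀), ?_, ?_⟩ hT hGQ
          · rw [hD, Multiset.add_cons, Multiset.cons_swap]
          · have hΓ₀ : Υ + Δ + Δ'₀ = Γ₀ := by
              apply (Multiset.cons_inj_right
                (⟨yn, .base sv, .base c, .tensor .one .one⟩ : TChan L)).1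
              rw [← hΓ, hD, Multiset.add_cons]
            intro ch hch
            rcases Multiset.mem_cons.1 hch with rfl | hch
            · exact hzA
            · rcases Multiset.mem_add.1 hch with hch | hch
              · refine hone ch ?_
                rw [← hΓ₀]
                exact Multiset.mem_add.2 (Or.inl (Multiset.mem_add.2 (Or.inl hch)))
              · refine hone ch ?_
                rw [← hΓ₀]
                exact Multiset.mem_add.2 (Or.inr hch)
  | congr hc h ih =>
      intro hA hI hT hG
      exact ih hA hI hT ((GP_cong (goodG_g1 x) hc).2 hG)

end StoringAux4

section StoringAux5
variable {L : Type}

/-- Stage 0: context all `1`-typed, the process is a single input thread on `x`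
at `sv` towards `c`, offering `x : (1 ⊗ 1) ⊸ (1 ⊗ 1)`. -/
lemma M0 {le : L → L → Prop} {x : ℕ} {sv c : L} {𝒜 : Set (ELoc L × ELoc L)}
    {Γ : Multiset (TChan L)} {P : Proc L} {T : TChan L}
    (h : Typing le true false 𝒜 Γ P T) :
    𝒜 = A0 le →
    (∀ ch ∈ Γ, ch.ty = Ty.one) →
    T = ⟨x, .base c, .base sv,
          Ty.limp (.tensor .one .one) (.tensor .one .one)⟩ →
    GP x sv (g0 x c) P →
    LeA le (A0 le) (.base sv) (.base c) := by
  induction h with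
  | id _ => intro _ _ _ hG; exact absurd hG (by simp [GP, g0])
  | oneR _ => intro _ _ _ hG; exact absurd hG (by simp [GP, g0])
  | tensorR _ _ _ _ _ _ _ _ _ => intro _ _ _ hG; exact absurd hG (by simp [GP, g0])
  | limpL _ _ _ _ _ _ _ => intro _ _ _ hG; exact absurd hG (by simp [GP, g0])
  | copy _ _ => intro _ _ _ hG; exact absurd hG (by simp [GP, g0])
  | oplusL _ _ _ _ => intro _ _ _ hG; exact absurd hG (by simp [GP, g0])
  | oplusR1 _ _ _ => intro _ _ _ hG; exact absurd hG (by simp [GP, g0])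
  | oplusR2 _ _ _ => intro _ _ _ hG; exact absurd hG (by simp [GP, g0])
  | withL1 _ _ => intro _ _ _ hG; exact absurd hG (by simp [GP, g0])
  | withL2 _ _ => intro _ _ _ hG; exact absurd hG (by simp [GP, g0])
  | withR _ _ _ _ _ => intro _ _ _ hG; exact absurd hG (by simp [GP, g0])
  | bangL _ _ => intro _ _ _ hG; exact absurd hG (by simp [GP, g0])
  | bangR _ _ _ => intro _ _ _ hG; exact absurd hG (by simp [GP, g0])
  | cupL _ _ _ => intro _ _ _ hG; exact absurd hG (by simp [GP, g0])
  | cupR _ _ _ _ => intro _ _ _ hG; exact absurd hG (by simp [GP, g0])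
  | capL _ _ _ => intro _ _ _ hG; exact absurd hG (by simp [GP, g0])
  | capR _ _ _ _ => intro _ _ _ hG; exact absurd hG (by simp [GP, g0])
  | bangPlusR _ _ _ => intro _ _ _ hG; exact absurd hG (by simp [GP, g0])
  | oneL h ih =>
      intro hA hone hT hG
      exact ih hA (fun ch hch => hone ch (Multiset.mem_cons_of_mem hch)) hT hG
  | tensorL h ih =>
      intro hA hone hT hG
      have := hone _ (Multiset.mem_cons_self _ _)
      simp at this
  | limpR hr h ih =>
      intro hA hone hT hG
      rename_i AA G1' x1 y1 a b A B p
      simp only [TChan.mk.injEq, Ty.limp.injEq] at hT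
      obtain ⟨hx1, ha, hb, hA1, hB1⟩ := hT
      subst hx1; subst ha; subst hb; subst hA1; subst hB1
      obtain ⟨-, hg⟩ := hG
      obtain ⟨-, -, hy1, hgp⟩ := hg
      refine M1 h hA ⟨y1, rGe le AA (.base sv) G1', rfl, ?_⟩ rfl ⟨rfl, hgp⟩
      intro ch hch
      exact hone ch (Multiset.mem_filter.1 hch).1
  | cut hck hΥ hΔ hΔ' h1 h2 ih1 ih2 =>
      intro hA hone hT hG
      rename_i AA Υ Δ Δ' T' x1 a b A P1 Q1
      simp only [GP] at hG
      obtain ⟨hx1, hsplit⟩ := hG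
      rcases hsplit with ⟨hGP, hPnQ⟩ | ⟨hPnP, hGQ⟩
      · have hz := Zp h2 hPnQ
        rw [hT] at hz
        exact absurd hz.1 (by simp)
      · have hz := Zp h1 hPnP
        refine ih2 hA ?_ hT hGQ
        intro ch hch
        rcases Multiset.mem_cons.1 hch with rfl | hch
        · exact hz.1
        · rcases Multiset.mem_add.1 hch with hch | hch
          · exact hone ch (Multiset.mem_add.2 (Or.inl (Multiset.mem_add.2 (Or.inl hch))))
          · exact hone ch (Multiset.mem_add.2 (Or.inr hch))
  | congr hc h ih =>
      intro hA hone hT hG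
      exact ih hA hone hT ((GP_cong (goodG_g0 x c) hc).2 hG)

end StoringAux5

/-- **Storing values** (Example 5): with `A = 1 ⊗ 1` and
`W = x_c(y).x_c⟨z⟩.(0 ‖ y_c(k).0)`, the judgment
`𝒜 : · ⊢ sv[W] :: x^c_sv : A ⊸ A` is derivable iff `sv ⪯_l c`:
a server may store a value received from the client for later use only when
the client's location is accessible from the server's location. -/
theorem storing_values {L : Type} (le : L → L → Prop)
    (hrefl : ∀ a, le a a) (htrans : ∀ {a b c : L}, le a b → le b c → le a c)
    (sv c : L) (x y z k : ℕ)
    (hxy : x ≠ y) (hxz : x ≠ z) (hxk : x ≠ k)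
    (hyz : y ≠ z) (hyk : y ≠ k) (hzk : z ≠ k) :
    (Typing le true false {pr | LocLe le pr.1 pr.2} (0 : Multiset (TChan L))
      (.loc (.base sv)
        (.inp x (.base c) y
          (.out x (.base c) z
            (.par .nil (.inp y (.base c) k .nil)))))
      ⟨x, .base c, .base sv,
        Ty.limp (Ty.tensor Ty.one Ty.one) (Ty.tensor Ty.one Ty.one)⟩)
    ↔ le sv c := by
  constructor
  · intro h
    have hLeA := M0 (x := x) (sv := sv) (c := c) h rfl
      (fun ch hch => absurd hch (by simp)) rfl
      ⟨rfl, rfl, rfl, Ne.symm hxy, rfl⟩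
    exact leA_base_base (le := le) hrefl htrans hLeA
  · intro hsvc
    have hle' : LeA le {pr | LocLe le pr.1 pr.2} (ELoc.base sv) (ELoc.base c) :=
      Relation.ReflTransGen.single (Or.inl (LocLe.base hsvc))
    have h0 : rGe le {pr | LocLe le pr.1 pr.2} (ELoc.base sv)
        (0 : Multiset (TChan L)) = 0 := by
      simp [rGe]
    refine Typing.limpR (Γ := 0) (fun ch hch => absurd hch (by simp)) ?_
    rw [h0]
    have hctx : ((⟨y, ELoc.base sv, ELoc.base c, Ty.tensor Ty.one Ty.one⟩ : TChan L)
          ::ₘ (0 : Multiset (TChan L)))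
        = 0 + 0 + ((⟨y, ELoc.base sv, ELoc.base c, Ty.tensor Ty.one Ty.one⟩ : TChan L)
          ::ₘ (0 : Multiset (TChan L))) := by simp
    rw [hctx]
    refine Typing.tensorR (fun ch hch => absurd hch (by simp))
      (fun ch hch => absurd hch (by simp)) ?_
      (fun ch hch => absurd hch (by simp)) ?_ ?_ ?_
    · intro ch hch
      rcases Multiset.mem_cons.1 hch with rfl | hch
      · simp [ELoc.isUnb]
      · exact absurd hch (by simp)
    · intro ch hch
      rcases Multiset.mem_cons.1 hch with rfl | hch
      · exact Or.inr hle'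
      · exact absurd hch (by simp)
    · rw [h0, add_zero]
      exact Typing.oneR (fun ch hch => absurd hch (by simp))
    · have h1 : rGe le {pr | LocLe le pr.1 pr.2} (ELoc.base sv)
          ((⟨y, ELoc.base sv, ELoc.base c, Ty.tensor Ty.one Ty.one⟩ : TChan L)
            ::ₘ (0 : Multiset (TChan L)))
          = (⟨y, ELoc.base sv, ELoc.base c, Ty.tensor Ty.one Ty.one⟩ : TChan L)
            ::ₘ (0 : Multiset (TChan L)) := by
        rw [rGe, Multiset.filter_cons_of_pos, Multiset.filter_zero]
        exact hle'
      rw [h0, h1, zero_add]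
      exact Typing.tensorL (Typing.oneL (Typing.oneL
        (Typing.oneR (fun ch hch => absurd hch (by simp)))))
end
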